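/- arXiv:2604.13265 — 5 statements merged into one kernel-verified Lean document; each statement's English description precedes it below -/
import Mathlib

section
/- Let (X, A, Γ, S, T) be random variables where A, Γ are discrete and κ = P(Γ = 1) > 0. Suppose that for all x, a, s: E[y(T) | X = x, A = a, S = s, Γ = 1] = E[y(T) | X = x, A = 1, S = s, Γ = 0] =: μ(x, 1, s), where y is a bounded measurable function. Then E[E[y(T) | X, A = a, Γ = 1] | Γ = 1] = E[(Γ/κ) ∫ μ(X, 1, s) f(s | X, A = a, Γ = 1) ds], where f(s | X, A = a, Γ = 1) denotes the conditional density of S given (X, A = a, Γ = 1). -/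
open MeasureTheory

lemma integrable_of_abs_bound {Ω : Type*} [MeasurableSpace Ω] (P : Measure Ω)
    [IsFiniteMeasure P] (f : Ω → ℝ) (hf : Measurable f) (C : ℝ) (hb : ∀ ω, |f ω| ≤ C) :
    Integrable f P := by
  refine ⟨hf.aestronglyMeasurable, ?_⟩
  exact HasFiniteIntegral.of_bounded (C := C)
    (Filter.Eventually.of_forall fun ω => by simpa [Real.norm_eq_abs] using hb ω)

/-- Mediation-formula identification: if the conditional mean of `y(T)` given `(X, S)`
is the same in the `(A = a, Γ = 1)` arm as in the `(A = 1, Γ = 0)` arm (equal to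
`μ(X, 1, S)`), then `E[E[y(T) | X, A = a, Γ = 1] | Γ = 1]
  = E[(Γ/κ) ∫ μ(X, 1, s) f(s | X, A = a, Γ = 1) ds]`. -/
theorem mediation_formula_identification
    {Ω 𝓧 𝓢 𝓣 : Type*} [MeasurableSpace Ω] [MeasurableSpace 𝓧] [MeasurableSpace 𝓢]
    [MeasurableSpace 𝓣]
    (P : Measure Ω) [IsProbabilityMeasure P]
    (X : Ω → 𝓧) (A : Ω → ℕ) (Γ : Ω → ℕ) (S : Ω → 𝓢) (T : Ω → 𝓣)
    (hX : Measurable X) (hA : Measurable A) (hΓ : Measurable Γ) (hS : Measurable S)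
    (hT : Measurable T)
    (hΓ01 : ∀ ω, Γ ω = 0 ∨ Γ ω = 1)
    (a : ℕ)
    (κ : ℝ) (hκdef : κ = (P {ω | Γ ω = 1}).toReal) (hκpos : 0 < κ)
    (y : 𝓣 → ℝ) (hy : Measurable y) (Cy : ℝ) (hyb : ∀ t, |y t| ≤ Cy)
    (ν : Measure 𝓢) [SigmaFinite ν]
    -- positivity of the treatment propensity in the target population:
    (π : 𝓧 → ℝ) (hπm : Measurable π) (hπbd : ∀ x, 0 < π x ∧ π x ≤ 1)
    (hπ : ∀ h : 𝓧 → ℝ, Measurable h → (∃ C, ∀ x, |h x| ≤ C) →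
      ∫ ω, (if A ω = a ∧ Γ ω = 1 then (1:ℝ) else 0) * h (X ω) ∂P
        = ∫ ω, (if Γ ω = 1 then (1:ℝ) else 0) * π (X ω) * h (X ω) ∂P)
    -- μ is a common version of E[y(T) | X, S] in both the (A = a, Γ = 1) and the
    -- (A = 1, Γ = 0) strata:
    (μ : 𝓧 → 𝓢 → ℝ) (hμm : Measurable (Function.uncurry μ))
    (Cμ : ℝ) (hμb : ∀ x s, |μ x s| ≤ Cμ)
    (hμ1 : ∀ g : 𝓧 → 𝓢 → ℝ, Measurable (Function.uncurry g) → (∃ C, ∀ x s, |g x s| ≤ C) →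
      ∫ ω, (if A ω = a ∧ Γ ω = 1 then (1:ℝ) else 0) * y (T ω) * g (X ω) (S ω) ∂P
        = ∫ ω, (if A ω = a ∧ Γ ω = 1 then (1:ℝ) else 0) * μ (X ω) (S ω) * g (X ω) (S ω) ∂P)
    (hμ0 : ∀ g : 𝓧 → 𝓢 → ℝ, Measurable (Function.uncurry g) → (∃ C, ∀ x s, |g x s| ≤ C) →
      ∫ ω, (if A ω = 1 ∧ Γ ω = 0 then (1:ℝ) else 0) * y (T ω) * g (X ω) (S ω) ∂P
        = ∫ ω, (if A ω = 1 ∧ Γ ω = 0 then (1:ℝ) else 0) * μ (X ω) (S ω) * g (X ω) (S ω) ∂P)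
    -- fa1 is the conditional ν-density of S given (X, A = a, Γ = 1):
    (fa1 : 𝓧 → 𝓢 → ℝ) (hfa1m : Measurable (Function.uncurry fa1))
    (Cf : ℝ) (hfa1bd : ∀ x s, 0 ≤ fa1 x s ∧ fa1 x s ≤ Cf)
    (hfa1 : ∀ g : 𝓧 → 𝓢 → ℝ, Measurable (Function.uncurry g) → (∃ C, ∀ x s, |g x s| ≤ C) →
      ∫ ω, (if A ω = a ∧ Γ ω = 1 then (1:ℝ) else 0) * g (X ω) (S ω) ∂P
        = ∫ ω, (if A ω = a ∧ Γ ω = 1 then (1:ℝ) else 0) * (∫ s, g (X ω) s * fa1 (X ω) s ∂ν) ∂P)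
    -- r is a version of E[y(T) | X, A = a, Γ = 1]:
    (r : 𝓧 → ℝ) (hrm : Measurable r) (Cr : ℝ) (hrb : ∀ x, |r x| ≤ Cr)
    (hr : ∀ h : 𝓧 → ℝ, Measurable h → (∃ C, ∀ x, |h x| ≤ C) →
      ∫ ω, (if A ω = a ∧ Γ ω = 1 then (1:ℝ) else 0) * y (T ω) * h (X ω) ∂P
        = ∫ ω, (if A ω = a ∧ Γ ω = 1 then (1:ℝ) else 0) * r (X ω) * h (X ω) ∂P) :
    ∫ ω, ((if Γ ω = 1 then (1:ℝ) else 0) / κ) * r (X ω) ∂P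
      = ∫ ω, ((if Γ ω = 1 then (1:ℝ) else 0) / κ) * (∫ s, μ (X ω) s * fa1 (X ω) s ∂ν) ∂P := by
  classical
  set m : 𝓧 → ℝ := fun x => ∫ s, μ x s * fa1 x s ∂ν with hm_def
  have hmm : Measurable m := by
    have : Measurable (Function.uncurry fun x s => μ x s * fa1 x s) := hμm.mul hfa1m
    exact (this.stronglyMeasurable.integral_prod_right).measurable
  -- key: for every bounded measurable test h,
  -- ∫ 1_{A=a,Γ=1} r(X) h(X) = ∫ 1_{A=a,Γ=1} m(X) h(X)
  have key : ∀ h : 𝓧 → ℝ, Measurable h → ∀ C : ℝ, (∀ x, |h x| ≤ C) →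
      ∫ ω, (if A ω = a ∧ Γ ω = 1 then (1:ℝ) else 0) * r (X ω) * h (X ω) ∂P
        = ∫ ω, (if A ω = a ∧ Γ ω = 1 then (1:ℝ) else 0) * m (X ω) * h (X ω) ∂P := by
    intro h hh C hC
    rw [← hr h hh ⟨C, hC⟩]
    have huc : Measurable (Function.uncurry fun (x : 𝓧) (_ : 𝓢) => h x) :=
      hh.comp measurable_fst
    rw [hμ1 (fun x _ => h x) huc ⟨C, fun x _ => hC x⟩]
    have hb2 : ∀ x s, |μ x s * h x| ≤ (Cμ + 1) * (C + 1) := by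
      intro x s
      have h1 := hμb x s
      have h2 := hC x
      have h3 : (0:ℝ) ≤ |μ x s| := abs_nonneg _
      have h4 : (0:ℝ) ≤ |h x| := abs_nonneg _
      rw [abs_mul]
      nlinarith
    have hgm : Measurable (Function.uncurry fun x s => μ x s * h x) :=
      hμm.mul (hh.comp measurable_fst)
    have := hfa1 (fun x s => μ x s * h x) hgm ⟨(Cμ + 1) * (C + 1), hb2⟩
    have eL : ∀ ω, (if A ω = a ∧ Γ ω = 1 then (1:ℝ) else 0) * (μ (X ω) (S ω) * h (X ω))
        = (if A ω = a ∧ Γ ω = 1 then (1:ℝ) else 0) * μ (X ω) (S ω) * h (X ω) := by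
      intro ω; ring
    have eR : ∀ x, (∫ s, (μ x s * h x) * fa1 x s ∂ν) = m x * h x := by
      intro x
      have e : (fun s => (μ x s * h x) * fa1 x s) = fun s => (μ x s * fa1 x s) * h x := by
        funext s; ring
      rw [e, integral_mul_const]
    simp only [eL, eR] at this
    rw [this]
    congr 1; funext ω; ring
  -- the useful test function h' = (r-m)/(1+(r-m)^2)
  set d : 𝓧 → ℝ := fun x => r x - m x with hd_def
  have hdm : Measurable d := hrm.sub hmm
  set h' : 𝓧 → ℝ := fun x => d x / (1 + d x ^ 2) with hh'_def
  have hpos : ∀ x, (0:ℝ) < 1 + d x ^ 2 := fun x => by positivity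
  have hh'm : Measurable h' := hdm.div ((measurable_const.add (hdm.pow_const 2)))
  have hh'b : ∀ x, |h' x| ≤ 1 := by
    intro x
    rw [abs_div, abs_of_pos (hpos x), div_le_one (hpos x)]
    nlinarith [abs_nonneg (d x), sq_abs (d x)]
  have hprod_nonneg : ∀ x, 0 ≤ d x * h' x := by
    intro x
    have : d x * h' x = d x ^ 2 / (1 + d x ^ 2) := by
      rw [hh'_def]; field_simp
    rw [this]; positivity
  have hprod_le : ∀ x, d x * h' x ≤ 1 := by
    intro x
    have : d x * h' x = d x ^ 2 / (1 + d x ^ 2) := by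
      rw [hh'_def]; field_simp
    rw [this, div_le_one (hpos x)]; nlinarith
  have hprod_zero : ∀ x, d x * h' x = 0 → r x = m x := by
    intro x hx
    have : d x * h' x = d x ^ 2 / (1 + d x ^ 2) := by
      rw [hh'_def]; field_simp
    rw [this] at hx
    have h2 : d x ^ 2 = 0 := by
      rcases div_eq_zero_iff.mp hx with h | h
      · exact h
      · nlinarith [hpos x]
    have hdx : d x = 0 := by nlinarith [sq_nonneg (d x), sq_abs (d x), abs_nonneg (d x)]
    linarith [sub_eq_zero.mp hdx]
  -- integrability helpers
  have int1 : Integrable (fun ω => (if A ω = a ∧ Γ ω = 1 then (1:ℝ) else 0) * r (X ω) * h' (X ω)) P := by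
    refine integrable_of_abs_bound P _ ?_ ((Cr + 1) * 1) ?_
    · exact ((Measurable.ite ((hA (measurableSet_singleton a)).inter
        (hΓ (measurableSet_singleton 1))) measurable_const measurable_const :
          Measurable fun ω => if A ω = a ∧ Γ ω = 1 then (1:ℝ) else 0).mul
        (hrm.comp hX)).mul (hh'm.comp hX)
    · intro ω
      rw [abs_mul, abs_mul]
      have h1 : |if A ω = a ∧ Γ ω = 1 then (1:ℝ) else 0| ≤ 1 := by split <;> simp
      have h2 := hrb (X ω)
      have h3 := hh'b (X ω)
      have h4 : (0:ℝ) ≤ |r (X ω)| := abs_nonneg _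
      have h5 : (0:ℝ) ≤ |if A ω = a ∧ Γ ω = 1 then (1:ℝ) else 0| := abs_nonneg _
      have h6 : (0:ℝ) ≤ |h' (X ω)| := abs_nonneg _
      have hCr : (0:ℝ) ≤ Cr := h4.trans h2
      have step1 : |if A ω = a ∧ Γ ω = 1 then (1:ℝ) else 0| * |r (X ω)| ≤ 1 * Cr :=
        mul_le_mul h1 h2 h4 zero_le_one
      have step2 : |if A ω = a ∧ Γ ω = 1 then (1:ℝ) else 0| * |r (X ω)| * |h' (X ω)|
          ≤ (1 * Cr) * 1 := mul_le_mul step1 h3 h6 (by linarith)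
      linarith
  have int2 : Integrable (fun ω => (if A ω = a ∧ Γ ω = 1 then (1:ℝ) else 0) * m (X ω) * h' (X ω)) P := by
    refine integrable_of_abs_bound P _ ?_ (Cr + 1) ?_
    · exact ((Measurable.ite ((hA (measurableSet_singleton a)).inter
        (hΓ (measurableSet_singleton 1))) measurable_const measurable_const :
          Measurable fun ω => if A ω = a ∧ Γ ω = 1 then (1:ℝ) else 0).mul
        (hmm.comp hX)).mul (hh'm.comp hX)
    · intro ω
      have e : (if A ω = a ∧ Γ ω = 1 then (1:ℝ) else 0) * m (X ω) * h' (X ω)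
          = (if A ω = a ∧ Γ ω = 1 then (1:ℝ) else 0) *
            (r (X ω) * h' (X ω) - d (X ω) * h' (X ω)) := by
        rw [hd_def]; ring
      rw [e, abs_mul]
      have h1 : |if A ω = a ∧ Γ ω = 1 then (1:ℝ) else 0| ≤ 1 := by split <;> simp
      have h5 : (0:ℝ) ≤ |if A ω = a ∧ Γ ω = 1 then (1:ℝ) else 0| := abs_nonneg _
      have h2 : |r (X ω) * h' (X ω) - d (X ω) * h' (X ω)| ≤ Cr + 1 := by
        have := abs_sub (r (X ω) * h' (X ω)) (d (X ω) * h' (X ω))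
        have hb1 : |r (X ω) * h' (X ω)| ≤ Cr := by
          rw [abs_mul]
          have := hrb (X ω); have := hh'b (X ω)
          nlinarith [abs_nonneg (r (X ω)), abs_nonneg (h' (X ω))]
        have hb2 : |d (X ω) * h' (X ω)| ≤ 1 := by
          rw [abs_of_nonneg (hprod_nonneg (X ω))]; exact hprod_le (X ω)
        calc |r (X ω) * h' (X ω) - d (X ω) * h' (X ω)|
            ≤ |r (X ω) * h' (X ω)| + |d (X ω) * h' (X ω)| := abs_sub _ _
          _ ≤ Cr + 1 := by linarith
      nlinarith [abs_nonneg (r (X ω) * h' (X ω) - d (X ω) * h' (X ω))]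
  -- ∫ 1_{A=a,Γ=1} (d h')(X) = 0
  have hz : ∫ ω, (if A ω = a ∧ Γ ω = 1 then (1:ℝ) else 0) * (d (X ω) * h' (X ω)) ∂P = 0 := by
    have e : (fun ω => (if A ω = a ∧ Γ ω = 1 then (1:ℝ) else 0) * (d (X ω) * h' (X ω)))
        = fun ω => (if A ω = a ∧ Γ ω = 1 then (1:ℝ) else 0) * r (X ω) * h' (X ω)
          - (if A ω = a ∧ Γ ω = 1 then (1:ℝ) else 0) * m (X ω) * h' (X ω) := by
      funext ω; rw [hd_def]; ring
    rw [e, integral_sub int1 int2, key h' hh'm 1 hh'b, sub_self]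
  -- transfer to Γ = 1 via the propensity
  have hπ' := hπ (fun x => d x * h' x) (hdm.mul hh'm)
    ⟨1, fun x => by rw [abs_of_nonneg (hprod_nonneg x)]; exact hprod_le x⟩
  rw [hz] at hπ'
  -- the RHS integrand is nonneg, measurable, bounded, so a.e. zero
  have hind : Measurable fun ω => (if Γ ω = 1 then (1:ℝ) else 0) :=
    Measurable.ite (hΓ (measurableSet_singleton 1)) measurable_const measurable_const
  have hintRHS : Integrable
      (fun ω => (if Γ ω = 1 then (1:ℝ) else 0) * π (X ω) * (d (X ω) * h' (X ω))) P := by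
    refine integrable_of_abs_bound P _ ?_ 1 ?_
    · exact (hind.mul (hπm.comp hX)).mul ((hdm.comp hX).mul (hh'm.comp hX))
    · intro ω
      rw [abs_mul, abs_mul]
      have h1 : |if Γ ω = 1 then (1:ℝ) else 0| ≤ 1 := by split <;> simp
      have h2 : |π (X ω)| ≤ 1 := by
        rw [abs_of_pos (hπbd (X ω)).1]; exact (hπbd (X ω)).2
      have h3 : |d (X ω) * h' (X ω)| ≤ 1 := by
        rw [abs_of_nonneg (hprod_nonneg (X ω))]; exact hprod_le (X ω)
      have h4 : (0:ℝ) ≤ |if Γ ω = 1 then (1:ℝ) else 0| := abs_nonneg _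
      have h5 : (0:ℝ) ≤ |π (X ω)| := abs_nonneg _
      have h6 : (0:ℝ) ≤ |d (X ω) * h' (X ω)| := abs_nonneg _
      have step1 : |if Γ ω = 1 then (1:ℝ) else 0| * |π (X ω)| ≤ 1 * 1 :=
        mul_le_mul h1 h2 h5 zero_le_one
      have step2 : |if Γ ω = 1 then (1:ℝ) else 0| * |π (X ω)| * |d (X ω) * h' (X ω)|
          ≤ (1 * 1) * 1 := mul_le_mul step1 h3 h6 (by linarith)
      linarith
  have hnn : 0 ≤ᵐ[P] fun ω => (if Γ ω = 1 then (1:ℝ) else 0) * π (X ω) * (d (X ω) * h' (X ω)) := by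
    refine Filter.Eventually.of_forall fun ω => ?_
    have h2 := (hπbd (X ω)).1
    have h3 := hprod_nonneg (X ω)
    have h1 : (0:ℝ) ≤ if Γ ω = 1 then (1:ℝ) else 0 := by split <;> norm_num
    positivity
  have haez : (fun ω => (if Γ ω = 1 then (1:ℝ) else 0) * π (X ω) * (d (X ω) * h' (X ω)))
      =ᵐ[P] 0 := by
    rw [← integral_eq_zero_iff_of_nonneg_ae hnn hintRHS]
    exact hπ'.symm
  -- conclude: a.e. on {Γ = 1}, r(X) = m(X)
  refine integral_congr_ae ?_
  filter_upwards [haez] with ω hω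
  by_cases hΓω : Γ ω = 1
  · have hπpos := (hπbd (X ω)).1
    have hω' : π (X ω) * (d (X ω) * h' (X ω)) = 0 := by
      simpa [hΓω] using hω
    have hz0 : d (X ω) * h' (X ω) = 0 := by
      rcases mul_eq_zero.mp hω' with h | h
      · exact absurd h (ne_of_gt hπpos)
      · exact h
    have := hprod_zero (X ω) hz0
    simp only [this]; rfl
  · simp [hΓω]
end

section
/- Suppose μ*(x, 1, s) = μ(x, 1, s) a.s. and f*(s | x, A = a, Γ = 1) = f(s | x, A = a, Γ = 1) a.s. (model M_a holds), with positivity of all conditional probabilities/densities involved. Then the multiply-robust estimating functional E[ ((1−Γ)1{A=1}/κ)·(f*(Γ=1|X)/f*(A=1,Γ=0|X))·(f*(S|X,A=a,Γ=1)/f*(S|X,A=1,Γ=0))·(y(T) − μ*(X,1,S)) + (Γ·1{A=a}/(κ f*(A=a|X,Γ=1)))·(μ*(X,1,S) − ∫ μ*(X,1,s) f*(s|X,A=a,Γ=1) ds) + (Γ/κ)·∫ μ*(X,1,s) f*(s|X,A=a,Γ=1) ds ] equals Ψ(P) := E[(Γ/κ) ∫ μ(X,1,s) f(s|X,A=a,Γ=1)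 ds], even if the remaining nuisance components f*(Γ=1|X), f*(A=1,Γ=0|X), f*(S|X,A=1,Γ=0), f*(A=a|X,Γ=1) are arbitrary (bounded, positive) functions. -/
open MeasureTheory

private lemma aux_add_eq {Ω : Type*} [MeasurableSpace Ω] (P : Measure Ω)
    (F G : Ω → ℝ) (hF : Integrable F P) (hF0 : ∫ ω, F ω ∂P = 0) :
    ∫ ω, (F ω + G ω) ∂P = ∫ ω, G ω ∂P := by
  by_cases hG : Integrable G P
  · rw [integral_add hF hG, hF0, zero_add]
  · rw [integral_undef hG, integral_undef]
    intro hsum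
    exact hG ((hsum.sub hF).congr (ae_of_all _ fun ω => by simp))

private lemma aux_bdd_integrable {Ω : Type*} [MeasurableSpace Ω] (P : Measure Ω)
    [IsFiniteMeasure P] (f : Ω → ℝ) (hf : AEStronglyMeasurable f P) (C : ℝ)
    (h : ∀ ω, |f ω| ≤ C) : Integrable f P :=
  Integrable.mono' (integrable_const C) hf (ae_of_all _ fun ω => by
    simpa [Real.norm_eq_abs] using h ω)

private lemma aux_trunc_integrable {Ω : Type*} [MeasurableSpace Ω] (P : Measure Ω)
    [IsProbabilityMeasure P] (f : Ω → ℝ) (hf : Measurable f) (hf0 : ∀ ω, 0 ≤ f ω)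
    (C : ℝ)
    (hkey : ∀ n : ℕ, ∫ ω, (if f ω ≤ n then (1:ℝ) else 0) * f ω ∂P ≤ C) :
    Integrable f P := by
  refine ⟨hf.aestronglyMeasurable, ?_⟩
  have hnn : (0:Ω→ℝ) ≤ᵐ[P] f := ae_of_all _ hf0
  rw [hasFiniteIntegral_iff_ofReal hnn]
  set F : ℕ → Ω → ENNReal := fun n ω => ENNReal.ofReal ((if f ω ≤ n then (1:ℝ) else 0) * f ω) with hF
  have hmn : ∀ n : ℕ, Measurable (fun ω => (if f ω ≤ (n:ℝ) then (1:ℝ) else 0) * f ω) := by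
    intro n
    exact (Measurable.ite (hf measurableSet_Iic) measurable_const measurable_const).mul hf
  have hFm : ∀ n, Measurable (F n) := fun n => (hmn n).ennreal_ofReal
  have hmono : Monotone F := by
    intro n k hnk ω
    apply ENNReal.ofReal_le_ofReal
    by_cases h : f ω ≤ n
    · have h2 : f ω ≤ (k:ℝ) := le_trans h (by exact_mod_cast hnk)
      simp [h, h2]
    · simp only [h, if_neg, zero_mul]
      have := hf0 ω
      by_cases h2 : f ω ≤ (k:ℝ) <;> simp [h2] <;> positivity
  have hsup : ∀ ω, (⨆ n, F n ω) = ENNReal.ofReal (f ω) := by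
    intro ω
    apply le_antisymm
    · apply iSup_le; intro n; apply ENNReal.ofReal_le_ofReal
      by_cases h : f ω ≤ n <;> simp [h, hf0 ω]
    · have hn : f ω ≤ (⌈f ω⌉₊ : ℝ) := Nat.le_ceil _
      refine le_trans ?_ (le_iSup _ ⌈f ω⌉₊)
      simp [hF, hn]
  have hlim : ∫⁻ ω, ENNReal.ofReal (f ω) ∂P ≤ ENNReal.ofReal C := by
    calc ∫⁻ ω, ENNReal.ofReal (f ω) ∂P = ∫⁻ ω, ⨆ n, F n ω ∂P := by
          apply lintegral_congr; intro ω; rw [hsup]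
      _ = ⨆ n, ∫⁻ ω, F n ω ∂P := lintegral_iSup hFm hmono
      _ ≤ ENNReal.ofReal C := by
          apply iSup_le; intro n
          have hint : Integrable (fun ω => (if f ω ≤ (n:ℝ) then (1:ℝ) else 0) * f ω) P := by
            refine aux_bdd_integrable _ _ (hmn n).aestronglyMeasurable n ?_
            intro ω
            by_cases h : f ω ≤ (n:ℝ)
            · rw [if_pos h, one_mul, abs_of_nonneg (hf0 ω)]; exact h
            · simp only [if_neg h, zero_mul, abs_zero]
              positivity
          rw [← ofReal_integral_eq_lintegral_ofReal hint (ae_of_all _ fun ω => by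
            by_cases h : f ω ≤ (n:ℝ) <;> simp [h, hf0 ω])]
          exact ENNReal.ofReal_le_ofReal (hkey n)
  exact lt_of_le_of_lt hlim ENNReal.ofReal_lt_top

/-- Multiple robustness under model `M_a`: if the outcome regression `μ` and the
surrogate density `f(s|X,A=a,Γ=1)` are correctly specified, the multiply-robust
estimating functional is unbiased for `Ψ(P) = E[(Γ/κ)∫ μ(X,1,s) f(s|X,A=a,Γ=1) ds]`,
for arbitrary (bounded, positive) remaining nuisance components. -/
theorem multiple_robustness_Ma
    {Ω 𝓧 𝓢 𝓣 : Type*} [MeasurableSpace Ω] [MeasurableSpace 𝓧] [MeasurableSpace 𝓢]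
    [MeasurableSpace 𝓣]
    (P : Measure Ω) [IsProbabilityMeasure P]
    (X : Ω → 𝓧) (A : Ω → ℕ) (Γ : Ω → ℕ) (S : Ω → 𝓢) (T : Ω → 𝓣)
    (hX : Measurable X) (hA : Measurable A) (hΓ : Measurable Γ) (hS : Measurable S)
    (hT : Measurable T)
    (hΓ01 : ∀ ω, Γ ω = 0 ∨ Γ ω = 1)
    (a : ℕ) (ε M : ℝ) (hε : 0 < ε) (hεM : ε ≤ M)
    (κ : ℝ) (hκdef : κ = (P {ω | Γ ω = 1}).toReal) (hκpos : 0 < κ)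
    (y : 𝓣 → ℝ) (hy : Measurable y) (Cy : ℝ) (hyb : ∀ t, |y t| ≤ Cy)
    (ν : Measure 𝓢) [SigmaFinite ν]
    -- μ is the true outcome regression E[y(T) | X, A = 1, S, Γ = 0] (model M_a):
    (μ : 𝓧 → 𝓢 → ℝ) (hμm : Measurable (Function.uncurry μ))
    (Cμ : ℝ) (hμb : ∀ x s, |μ x s| ≤ Cμ)
    (hμ0 : ∀ g : 𝓧 → 𝓢 → ℝ, Measurable (Function.uncurry g) → (∃ C, ∀ x s, |g x s| ≤ C) →
      ∫ ω, (if A ω = 1 ∧ Γ ω = 0 then (1:ℝ) else 0) * y (T ω) * g (X ω) (S ω) ∂P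
        = ∫ ω, (if A ω = 1 ∧ Γ ω = 0 then (1:ℝ) else 0) * μ (X ω) (S ω) * g (X ω) (S ω) ∂P)
    -- fa1 is the true conditional ν-density of S given (X, A = a, Γ = 1) (model M_a):
    (fa1 : 𝓧 → 𝓢 → ℝ) (hfa1m : Measurable (Function.uncurry fa1))
    (hfa1bd : ∀ x s, 0 ≤ fa1 x s ∧ fa1 x s ≤ M)
    (hfa1 : ∀ g : 𝓧 → 𝓢 → ℝ, Measurable (Function.uncurry g) → (∃ C, ∀ x s, |g x s| ≤ C) →
      ∫ ω, (if A ω = a ∧ Γ ω = 1 then (1:ℝ) else 0) * g (X ω) (S ω) ∂P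
        = ∫ ω, (if A ω = a ∧ Γ ω = 1 then (1:ℝ) else 0) * (∫ s, g (X ω) s * fa1 (X ω) s ∂ν) ∂P)
    -- the remaining nuisance limits are arbitrary bounded positive functions:
    (w1 : 𝓧 → ℝ) (hw1m : Measurable w1) (hw1bd : ∀ x, ε ≤ w1 x ∧ w1 x ≤ M)
    (w2 : 𝓧 → ℝ) (hw2m : Measurable w2) (hw2bd : ∀ x, ε ≤ w2 x ∧ w2 x ≤ M)
    (wS : 𝓧 → 𝓢 → ℝ) (hwSm : Measurable (Function.uncurry wS))
    (hwSbd : ∀ x s, ε ≤ wS x s ∧ wS x s ≤ M)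
    (πst : 𝓧 → ℝ) (hπstm : Measurable πst) (hπstbd : ∀ x, ε ≤ πst x ∧ πst x ≤ M) :
    ∫ ω, (((if A ω = 1 ∧ Γ ω = 0 then (1:ℝ) else 0) / κ)
            * (w1 (X ω) / w2 (X ω)) * (fa1 (X ω) (S ω) / wS (X ω) (S ω))
            * (y (T ω) - μ (X ω) (S ω))
        + ((if A ω = a ∧ Γ ω = 1 then (1:ℝ) else 0) / (κ * πst (X ω)))
            * (μ (X ω) (S ω) - ∫ s, μ (X ω) s * fa1 (X ω) s ∂ν)
        + ((if Γ ω = 1 then (1:ℝ) else 0) / κ) * (∫ s, μ (X ω) s * fa1 (X ω) s ∂ν)) ∂P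
      = ∫ ω, ((if Γ ω = 1 then (1:ℝ) else 0) / κ) * (∫ s, μ (X ω) s * fa1 (X ω) s ∂ν) ∂P := by
  classical
  have hΩ : Nonempty Ω := by
    by_contra h
    rw [not_nonempty_iff] at h
    have h1 : P Set.univ = 1 := measure_univ
    rw [Set.univ_eq_empty_iff.2 h] at h1
    simp at h1
  obtain ⟨ω0⟩ := hΩ
  have hM0 : 0 < M := lt_of_lt_of_le hε hεM
  have hCμ0 : 0 ≤ Cμ := le_trans (abs_nonneg _) (hμb (X ω0) (S ω0))
  have hCy0 : 0 ≤ Cy := le_trans (abs_nonneg _) (hyb (T ω0))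
  have hXS : Measurable fun ω => (X ω, S ω) := hX.prodMk hS
  have hμXS : Measurable fun ω => μ (X ω) (S ω) := hμm.comp hXS
  have hfa1XS : Measurable fun ω => fa1 (X ω) (S ω) := hfa1m.comp hXS
  have hwSXS : Measurable fun ω => wS (X ω) (S ω) := hwSm.comp hXS
  have hyT : Measurable fun ω => y (T ω) := hy.comp hT
  have hEa_meas : Measurable fun ω => (if A ω = a ∧ Γ ω = 1 then (1:ℝ) else 0) := by
    refine Measurable.ite ?_ measurable_const measurable_const
    have h2 : {ω | A ω = a ∧ Γ ω = 1} = A ⁻¹' {a} ∩ Γ ⁻¹' {1} := rfl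
    rw [h2]; exact (hA (measurableSet_singleton a)).inter (hΓ (measurableSet_singleton 1))
  have hE1_meas : Measurable fun ω => (if A ω = 1 ∧ Γ ω = 0 then (1:ℝ) else 0) := by
    refine Measurable.ite ?_ measurable_const measurable_const
    have h2 : {ω | A ω = 1 ∧ Γ ω = 0} = A ⁻¹' {1} ∩ Γ ⁻¹' {0} := rfl
    rw [h2]; exact (hA (measurableSet_singleton 1)).inter (hΓ (measurableSet_singleton 0))
  have hmm : Measurable fun x : 𝓧 => ∫ s, μ x s * fa1 x s ∂ν := by
    have h1 : StronglyMeasurable fun p : 𝓧 × 𝓢 => μ p.1 p.2 * fa1 p.1 p.2 :=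
      (hμm.mul hfa1m).stronglyMeasurable
    exact h1.integral_prod_right'.measurable
  have hJm : Measurable fun x : 𝓧 => ∫ s, |μ x s| * fa1 x s ∂ν := by
    have h1 : StronglyMeasurable fun p : 𝓧 × 𝓢 => |μ p.1 p.2| * fa1 p.1 p.2 :=
      (hμm.abs.mul hfa1m).stronglyMeasurable
    exact h1.integral_prod_right'.measurable
  have hJ0 : ∀ x, 0 ≤ ∫ s, |μ x s| * fa1 x s ∂ν := fun x =>
    integral_nonneg fun s => mul_nonneg (abs_nonneg _) (hfa1bd x s).1
  have habsm : ∀ x, |∫ s, μ x s * fa1 x s ∂ν| ≤ ∫ s, |μ x s| * fa1 x s ∂ν := by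
    intro x
    calc |∫ s, μ x s * fa1 x s ∂ν| ≤ ∫ s, |μ x s * fa1 x s| ∂ν := by
          simpa only [Real.norm_eq_abs] using
            norm_integral_le_integral_norm (μ := ν) (fun s => μ x s * fa1 x s)
      _ = ∫ s, |μ x s| * fa1 x s ∂ν := by
          congr 1; funext s; rw [abs_mul, abs_of_nonneg (hfa1bd x s).1]
  -- Integrability of the indicator times J(X)
  have hJX : Measurable fun ω => ∫ s, |μ (X ω) s| * fa1 (X ω) s ∂ν := hJm.comp hX
  have hmX : Measurable fun ω => ∫ s, μ (X ω) s * fa1 (X ω) s ∂ν := hmm.comp hX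
  have hEJ_int : Integrable (fun ω => (if A ω = a ∧ Γ ω = 1 then (1:ℝ) else 0)
      * (∫ s, |μ (X ω) s| * fa1 (X ω) s ∂ν)) P := by
    apply aux_trunc_integrable P _ (hEa_meas.mul hJX)
      (fun ω => mul_nonneg (by dsimp only; split_ifs <;> norm_num) (hJ0 _)) Cμ
    intro n
    have hgm : Measurable (Function.uncurry fun x s =>
        (if (∫ s', |μ x s'| * fa1 x s' ∂ν) ≤ (n:ℝ) then (1:ℝ) else 0) * |μ x s|) := by
      apply Measurable.mul
      · exact Measurable.ite ((hJm.comp measurable_fst) measurableSet_Iic)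
          measurable_const measurable_const
      · exact hμm.abs
    have hgb : ∀ x s, abs ((if (∫ s', |μ x s'| * fa1 x s' ∂ν) ≤ (n:ℝ) then (1:ℝ) else 0) * |μ x s|) ≤ Cμ := by
      intro x s
      split_ifs with h
      · rw [one_mul, abs_abs]; exact hμb x s
      · simpa using hCμ0
    have happ := hfa1 _ hgm ⟨Cμ, hgb⟩
    have hinner : ∀ x : 𝓧, (∫ s, ((if (∫ s', |μ x s'| * fa1 x s' ∂ν) ≤ (n:ℝ) then (1:ℝ) else 0) * |μ x s|) * fa1 x s ∂ν)
        = (if (∫ s', |μ x s'| * fa1 x s' ∂ν) ≤ (n:ℝ) then (1:ℝ) else 0) * (∫ s, |μ x s| * fa1 x s ∂ν) := by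
      intro x
      rw [← integral_const_mul]
      congr 1; funext s; ring
    have happ2 : ∫ ω, (if A ω = a ∧ Γ ω = 1 then (1:ℝ) else 0)
          * ((if (∫ s', |μ (X ω) s'| * fa1 (X ω) s' ∂ν) ≤ (n:ℝ) then (1:ℝ) else 0) * |μ (X ω) (S ω)|) ∂P
        = ∫ ω, (if A ω = a ∧ Γ ω = 1 then (1:ℝ) else 0)
          * ((if (∫ s', |μ (X ω) s'| * fa1 (X ω) s' ∂ν) ≤ (n:ℝ) then (1:ℝ) else 0)
              * (∫ s, |μ (X ω) s| * fa1 (X ω) s ∂ν)) ∂P := by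
      rw [happ]
      refine integral_congr_ae (ae_of_all _ fun ω => ?_)
      exact congrArg (fun z => (if A ω = a ∧ Γ ω = 1 then (1:ℝ) else 0) * z) (hinner (X ω))
    have hintC : Integrable (fun ω => (if A ω = a ∧ Γ ω = 1 then (1:ℝ) else 0)
        * ((if (∫ s', |μ (X ω) s'| * fa1 (X ω) s' ∂ν) ≤ (n:ℝ) then (1:ℝ) else 0) * |μ (X ω) (S ω)|)) P := by
      refine aux_bdd_integrable P _ ?_ Cμ ?_
      · exact (hEa_meas.mul ((Measurable.ite (hJX measurableSet_Iic) measurable_const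
          measurable_const).mul (hμXS.abs))).aestronglyMeasurable
      · intro ω
        by_cases h1 : A ω = a ∧ Γ ω = 1 <;>
          by_cases h2 : (∫ s', |μ (X ω) s'| * fa1 (X ω) s' ∂ν) ≤ (n:ℝ) <;>
          simp [h1, h2, hCμ0, abs_abs, hμb]
    calc ∫ ω, (if ((if A ω = a ∧ Γ ω = 1 then (1:ℝ) else 0) * ∫ s, |μ (X ω) s| * fa1 (X ω) s ∂ν) ≤ (n:ℝ) then (1:ℝ) else 0)
            * ((if A ω = a ∧ Γ ω = 1 then (1:ℝ) else 0) * ∫ s, |μ (X ω) s| * fa1 (X ω) s ∂ν) ∂P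
        = ∫ ω, (if A ω = a ∧ Γ ω = 1 then (1:ℝ) else 0)
            * ((if (∫ s', |μ (X ω) s'| * fa1 (X ω) s' ∂ν) ≤ (n:ℝ) then (1:ℝ) else 0)
                * (∫ s, |μ (X ω) s| * fa1 (X ω) s ∂ν)) ∂P := by
          refine integral_congr_ae (ae_of_all _ fun ω => ?_)
          by_cases h1 : A ω = a ∧ Γ ω = 1
          · simp [h1]
          · simp [h1]
      _ = ∫ ω, (if A ω = a ∧ Γ ω = 1 then (1:ℝ) else 0)
            * ((if (∫ s', |μ (X ω) s'| * fa1 (X ω) s' ∂ν) ≤ (n:ℝ) then (1:ℝ) else 0)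
                * |μ (X ω) (S ω)|) ∂P := happ2.symm
      _ ≤ ∫ _ω, Cμ ∂P := by
          refine integral_mono hintC (integrable_const _) fun ω => ?_
          by_cases h1 : A ω = a ∧ Γ ω = 1 <;>
            by_cases h2 : (∫ s', |μ (X ω) s'| * fa1 (X ω) s' ∂ν) ≤ (n:ℝ) <;>
            simp [h1, h2, hCμ0]
          · exact hμb _ _
      _ = Cμ := by simp

  -- ===== Term 1 =====
  have hg1m : Measurable (Function.uncurry fun x s => w1 x / w2 x * (fa1 x s / wS x s) / κ) := by
    exact (((hw1m.comp measurable_fst).div (hw2m.comp measurable_fst)).mul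
      (hfa1m.div hwSm)).div measurable_const
  have hg1b : ∀ x s, |w1 x / w2 x * (fa1 x s / wS x s) / κ| ≤ M / ε * (M / ε) / κ := by
    intro x s
    have hw2p : 0 < w2 x := lt_of_lt_of_le hε (hw2bd x).1
    have hwSp : 0 < wS x s := lt_of_lt_of_le hε (hwSbd x s).1
    have h1 : 0 ≤ w1 x / w2 x := div_nonneg (le_trans hε.le (hw1bd x).1) hw2p.le
    have h2 : 0 ≤ fa1 x s / wS x s := div_nonneg (hfa1bd x s).1 hwSp.le
    have h3 : w1 x / w2 x ≤ M / ε := div_le_div₀ hM0.le (hw1bd x).2 hε (hw2bd x).1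
    have h4 : fa1 x s / wS x s ≤ M / ε := div_le_div₀ hM0.le (hfa1bd x s).2 hε (hwSbd x s).1
    rw [abs_of_nonneg (div_nonneg (mul_nonneg h1 h2) hκpos.le)]
    exact (div_le_div_iff_of_pos_right hκpos).2 (mul_le_mul h3 h4 h2 (div_nonneg hM0.le hε.le))
  have hg1XS : Measurable fun ω => w1 (X ω) / w2 (X ω) * (fa1 (X ω) (S ω) / wS (X ω) (S ω)) / κ :=
    (((hw1m.comp hX).div (hw2m.comp hX)).mul (hfa1XS.div hwSXS)).div measurable_const
  have hT1int_y : Integrable (fun ω => (if A ω = 1 ∧ Γ ω = 0 then (1:ℝ) else 0) * y (T ω)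
      * (w1 (X ω) / w2 (X ω) * (fa1 (X ω) (S ω) / wS (X ω) (S ω)) / κ)) P := by
    refine aux_bdd_integrable P _ ((hE1_meas.mul hyT).mul hg1XS).aestronglyMeasurable
      (Cy * (M / ε * (M / ε) / κ)) fun ω => ?_
    rw [abs_mul, abs_mul]
    have h5 : |if A ω = 1 ∧ Γ ω = 0 then (1:ℝ) else 0| ≤ 1 := by split_ifs <;> norm_num
    calc |if A ω = 1 ∧ Γ ω = 0 then (1:ℝ) else 0| * |y (T ω)|
          * |w1 (X ω) / w2 (X ω) * (fa1 (X ω) (S ω) / wS (X ω) (S ω)) / κ|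
        ≤ 1 * Cy * (M / ε * (M / ε) / κ) := by
          refine mul_le_mul (mul_le_mul h5 (hyb _) (abs_nonneg _) zero_le_one)
            (hg1b _ _) (abs_nonneg _) (by simpa using hCy0)
      _ = Cy * (M / ε * (M / ε) / κ) := by ring
  have hT1int_μ : Integrable (fun ω => (if A ω = 1 ∧ Γ ω = 0 then (1:ℝ) else 0) * μ (X ω) (S ω)
      * (w1 (X ω) / w2 (X ω) * (fa1 (X ω) (S ω) / wS (X ω) (S ω)) / κ)) P := by
    refine aux_bdd_integrable P _ ((hE1_meas.mul hμXS).mul hg1XS).aestronglyMeasurable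
      (Cμ * (M / ε * (M / ε) / κ)) fun ω => ?_
    rw [abs_mul, abs_mul]
    have h5 : |if A ω = 1 ∧ Γ ω = 0 then (1:ℝ) else 0| ≤ 1 := by split_ifs <;> norm_num
    calc |if A ω = 1 ∧ Γ ω = 0 then (1:ℝ) else 0| * |μ (X ω) (S ω)|
          * |w1 (X ω) / w2 (X ω) * (fa1 (X ω) (S ω) / wS (X ω) (S ω)) / κ|
        ≤ 1 * Cμ * (M / ε * (M / ε) / κ) := by
          refine mul_le_mul (mul_le_mul h5 (hμb _ _) (abs_nonneg _) zero_le_one)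
            (hg1b _ _) (abs_nonneg _) (by simpa using hCμ0)
      _ = Cμ * (M / ε * (M / ε) / κ) := by ring
  have hsplit1 : ∀ ω, (if A ω = 1 ∧ Γ ω = 0 then (1:ℝ) else 0) / κ
        * (w1 (X ω) / w2 (X ω)) * (fa1 (X ω) (S ω) / wS (X ω) (S ω)) * (y (T ω) - μ (X ω) (S ω))
      = (if A ω = 1 ∧ Γ ω = 0 then (1:ℝ) else 0) * y (T ω)
          * (w1 (X ω) / w2 (X ω) * (fa1 (X ω) (S ω) / wS (X ω) (S ω)) / κ)
        - (if A ω = 1 ∧ Γ ω = 0 then (1:ℝ) else 0) * μ (X ω) (S ω)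
          * (w1 (X ω) / w2 (X ω) * (fa1 (X ω) (S ω) / wS (X ω) (S ω)) / κ) := by
    intro ω; ring
  have hT1int : Integrable (fun ω => (if A ω = 1 ∧ Γ ω = 0 then (1:ℝ) else 0) / κ
      * (w1 (X ω) / w2 (X ω)) * (fa1 (X ω) (S ω) / wS (X ω) (S ω))
      * (y (T ω) - μ (X ω) (S ω))) P :=
    (hT1int_y.sub hT1int_μ).congr (ae_of_all _ fun ω => (hsplit1 ω).symm)
  have hT1zero : ∫ ω, (if A ω = 1 ∧ Γ ω = 0 then (1:ℝ) else 0) / κ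
      * (w1 (X ω) / w2 (X ω)) * (fa1 (X ω) (S ω) / wS (X ω) (S ω))
      * (y (T ω) - μ (X ω) (S ω)) ∂P = 0 := by
    rw [integral_congr_ae (ae_of_all _ hsplit1), integral_sub hT1int_y hT1int_μ,
      hμ0 (fun x s => w1 x / w2 x * (fa1 x s / wS x s) / κ) hg1m ⟨_, fun x s => hg1b x s⟩,
      sub_self]
  -- ===== Term 2 =====
  have hg2m : Measurable (Function.uncurry fun x s => μ x s / (κ * πst x)) :=
    hμm.div (measurable_const.mul (hπstm.comp measurable_fst))
  have hκε : (0:ℝ) < κ * ε := mul_pos hκpos hε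
  have hκπ : ∀ x, κ * ε ≤ κ * πst x := fun x =>
    mul_le_mul_of_nonneg_left (hπstbd x).1 hκpos.le
  have hg2b : ∀ x s, |μ x s / (κ * πst x)| ≤ Cμ / (κ * ε) := by
    intro x s
    rw [abs_div, abs_of_pos (lt_of_lt_of_le hκε (hκπ x))]
    exact div_le_div₀ hCμ0 (hμb x s) hκε (hκπ x)
  have hT2int_a : Integrable (fun ω => (if A ω = a ∧ Γ ω = 1 then (1:ℝ) else 0)
      * (μ (X ω) (S ω) / (κ * πst (X ω)))) P := by
    refine aux_bdd_integrable P _ (hEa_meas.mul (hμXS.div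
      (measurable_const.mul (hπstm.comp hX)))).aestronglyMeasurable (Cμ / (κ * ε)) fun ω => ?_
    rw [abs_mul]
    have h5 : |if A ω = a ∧ Γ ω = 1 then (1:ℝ) else 0| ≤ 1 := by split_ifs <;> norm_num
    calc |if A ω = a ∧ Γ ω = 1 then (1:ℝ) else 0| * |μ (X ω) (S ω) / (κ * πst (X ω))|
        ≤ 1 * (Cμ / (κ * ε)) := mul_le_mul h5 (hg2b _ _) (abs_nonneg _) zero_le_one
      _ = Cμ / (κ * ε) := one_mul _
  have hT2int_b : Integrable (fun ω => (if A ω = a ∧ Γ ω = 1 then (1:ℝ) else 0)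
      * ((∫ s, μ (X ω) s * fa1 (X ω) s ∂ν) / (κ * πst (X ω)))) P := by
    refine Integrable.mono' (hEJ_int.const_mul ((κ * ε)⁻¹))
      (hEa_meas.mul (hmX.div (measurable_const.mul (hπstm.comp hX)))).aestronglyMeasurable
      (ae_of_all _ fun ω => ?_)
    rw [Real.norm_eq_abs, abs_mul]
    by_cases h1 : A ω = a ∧ Γ ω = 1
    · simp only [if_pos h1, abs_one, one_mul]
      calc |(∫ s, μ (X ω) s * fa1 (X ω) s ∂ν) / (κ * πst (X ω))|
          = |∫ s, μ (X ω) s * fa1 (X ω) s ∂ν| / (κ * πst (X ω)) := by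
            rw [abs_div, abs_of_pos (lt_of_lt_of_le hκε (hκπ (X ω)))]
        _ ≤ (∫ s, |μ (X ω) s| * fa1 (X ω) s ∂ν) / (κ * ε) :=
            div_le_div₀ (hJ0 _) (habsm _) hκε (hκπ _)
        _ = (κ * ε)⁻¹ * ∫ s, |μ (X ω) s| * fa1 (X ω) s ∂ν := by rw [div_eq_inv_mul]
    · simp only [if_neg h1, abs_zero, zero_mul, mul_zero]
      positivity
  have hsplit2 : ∀ ω, (if A ω = a ∧ Γ ω = 1 then (1:ℝ) else 0) / (κ * πst (X ω))
        * (μ (X ω) (S ω) - ∫ s, μ (X ω) s * fa1 (X ω) s ∂ν)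
      = (if A ω = a ∧ Γ ω = 1 then (1:ℝ) else 0) * (μ (X ω) (S ω) / (κ * πst (X ω)))
        - (if A ω = a ∧ Γ ω = 1 then (1:ℝ) else 0)
          * ((∫ s, μ (X ω) s * fa1 (X ω) s ∂ν) / (κ * πst (X ω))) := by
    intro ω; ring
  have hT2int : Integrable (fun ω => (if A ω = a ∧ Γ ω = 1 then (1:ℝ) else 0) / (κ * πst (X ω))
      * (μ (X ω) (S ω) - ∫ s, μ (X ω) s * fa1 (X ω) s ∂ν)) P :=
    (hT2int_a.sub hT2int_b).congr (ae_of_all _ fun ω => (hsplit2 ω).symm)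
  have hinner2 : ∀ x : 𝓧, (∫ s, (μ x s / (κ * πst x)) * fa1 x s ∂ν)
      = (∫ s, μ x s * fa1 x s ∂ν) / (κ * πst x) := by
    intro x
    rw [div_eq_inv_mul, ← integral_const_mul]
    congr 1; funext s; ring
  have happ3 := hfa1 (fun x s => μ x s / (κ * πst x)) hg2m ⟨_, fun x s => hg2b x s⟩
  have hT2zero : ∫ ω, (if A ω = a ∧ Γ ω = 1 then (1:ℝ) else 0) / (κ * πst (X ω))
      * (μ (X ω) (S ω) - ∫ s, μ (X ω) s * fa1 (X ω) s ∂ν) ∂P = 0 := by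
    rw [integral_congr_ae (ae_of_all _ hsplit2), integral_sub hT2int_a hT2int_b]
    have heq : ∫ ω, (if A ω = a ∧ Γ ω = 1 then (1:ℝ) else 0)
          * (μ (X ω) (S ω) / (κ * πst (X ω))) ∂P
        = ∫ ω, (if A ω = a ∧ Γ ω = 1 then (1:ℝ) else 0)
          * ((∫ s, μ (X ω) s * fa1 (X ω) s ∂ν) / (κ * πst (X ω))) ∂P := by
      rw [happ3]
      refine integral_congr_ae (ae_of_all _ fun ω => ?_)
      exact congrArg (fun z => (if A ω = a ∧ Γ ω = 1 then (1:ℝ) else 0) * z) (hinner2 (X ω))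
    rw [heq, sub_self]
  -- ===== Combine =====
  have hFint : Integrable (fun ω =>
      (if A ω = 1 ∧ Γ ω = 0 then (1:ℝ) else 0) / κ
        * (w1 (X ω) / w2 (X ω)) * (fa1 (X ω) (S ω) / wS (X ω) (S ω)) * (y (T ω) - μ (X ω) (S ω))
      + (if A ω = a ∧ Γ ω = 1 then (1:ℝ) else 0) / (κ * πst (X ω))
        * (μ (X ω) (S ω) - ∫ s, μ (X ω) s * fa1 (X ω) s ∂ν)) P := hT1int.add hT2int
  have hF0 : ∫ ω, ((if A ω = 1 ∧ Γ ω = 0 then (1:ℝ) else 0) / κ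
        * (w1 (X ω) / w2 (X ω)) * (fa1 (X ω) (S ω) / wS (X ω) (S ω)) * (y (T ω) - μ (X ω) (S ω))
      + (if A ω = a ∧ Γ ω = 1 then (1:ℝ) else 0) / (κ * πst (X ω))
        * (μ (X ω) (S ω) - ∫ s, μ (X ω) s * fa1 (X ω) s ∂ν)) ∂P = 0 := by
    rw [integral_add hT1int hT2int, hT1zero, hT2zero, add_zero]
  exact aux_add_eq P _ _ hFint hF0
end

section
/- Suppose the weight nuisances are correct: f*(A = a | x, Γ=1) = P(A = a | x, Γ=1), f*(Γ=1|x) = P(Γ=1|x), f*(A=1, Γ=0|x) = P(A=1, Γ=0|x), f*(s|x, A=a, Γ=1) = f(s|x, A=a, Γ=1), f*(s|x, A=1, Γ=0) = f(s|x, A=1, Γ=0) (model M_c), with all quantities bounded and positive. Then for any bounded measurable μ*, E[ ((1−Γ)1{A=1}/κ)·(P(Γ=1|X)/P(A=1,Γ=0|X))·(f(S|X,A=a,Γ=1)/f(S|X,A=1,Γ=0))·μ*(X,1,S) ] = E[ (Γ1{A=a}/(κ P(A=a|X,Γ=1)))·μ*(X,1,S) ]. -/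
open MeasureTheory Filter
open scoped ENNReal NNReal

/-- Bounded a.e.-strongly-measurable functions are integrable on a finite measure. -/
lemma WeightAux.bdd_integrable {Ω : Type*} [MeasurableSpace Ω] {P : Measure Ω}
    [IsFiniteMeasure P] {f : Ω → ℝ} (hf : AEStronglyMeasurable f P) {C : ℝ}
    (h : ∀ ω, |f ω| ≤ C) : Integrable f P :=
  (integrable_const C).mono' hf (Filter.Eventually.of_forall (by simpa [Real.norm_eq_abs] using h))

/-- The integral of a function bounded by `C` over a probability measure is at most `C`. -/
lemma WeightAux.int_le {Ω : Type*} [MeasurableSpace Ω] {P : Measure Ω}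
    [IsProbabilityMeasure P] {f : Ω → ℝ} {C : ℝ} (h : ∀ ω, |f ω| ≤ C) :
    ∫ ω, f ω ∂P ≤ C := by
  have h1 : ‖∫ ω, f ω ∂P‖ ≤ C * (P Set.univ).toReal :=
    norm_integral_le_of_norm_le_const (Filter.Eventually.of_forall
      (by simpa [Real.norm_eq_abs] using h))
  simp only [measure_univ, ENNReal.toReal_one, mul_one] at h1
  exact le_trans (le_abs_self _) (by simpa [Real.norm_eq_abs] using h1)
set_option maxHeartbeats 1600000 in
/-- Model `M_c` lemma: when all weight nuisances are correctly specified, density-ratio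
weighting of the source population and inverse-propensity weighting in the target
population induce the same expectation for any bounded function `μ*` of `(X, S)`. -/
theorem weighting_equivalence_Mc
    {Ω 𝓧 𝓢 : Type*} [MeasurableSpace Ω] [MeasurableSpace 𝓧] [MeasurableSpace 𝓢]
    (P : Measure Ω) [IsProbabilityMeasure P]
    (X : Ω → 𝓧) (A : Ω → ℕ) (Γ : Ω → ℕ) (S : Ω → 𝓢)
    (hX : Measurable X) (hA : Measurable A) (hΓ : Measurable Γ) (hS : Measurable S)
    (hΓ01 : ∀ ω, Γ ω = 0 ∨ Γ ω = 1)
    (a : ℕ) (ε : ℝ) (hε : 0 < ε)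
    (κ : ℝ) (hκdef : κ = (P {ω | Γ ω = 1}).toReal) (hκpos : 0 < κ)
    (ν : Measure 𝓢) [SigmaFinite ν]
    -- p1 is a version of P(Γ = 1 | X):
    (p1 : 𝓧 → ℝ) (hp1m : Measurable p1) (hp1bd : ∀ x, 0 ≤ p1 x ∧ p1 x ≤ 1)
    (hp1 : ∀ h : 𝓧 → ℝ, Measurable h → (∃ C, ∀ x, |h x| ≤ C) →
      ∫ ω, (if Γ ω = 1 then (1:ℝ) else 0) * h (X ω) ∂P = ∫ ω, p1 (X ω) * h (X ω) ∂P)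
    -- p10 is a version of P(A = 1, Γ = 0 | X), with positivity:
    (p10 : 𝓧 → ℝ) (hp10m : Measurable p10) (hp10bd : ∀ x, ε ≤ p10 x ∧ p10 x ≤ 1)
    (hp10 : ∀ h : 𝓧 → ℝ, Measurable h → (∃ C, ∀ x, |h x| ≤ C) →
      ∫ ω, (if A ω = 1 ∧ Γ ω = 0 then (1:ℝ) else 0) * h (X ω) ∂P
        = ∫ ω, p10 (X ω) * h (X ω) ∂P)
    -- π is a version of P(A = a | X, Γ = 1), with positivity:
    (π : 𝓧 → ℝ) (hπm : Measurable π) (hπbd : ∀ x, ε ≤ π x ∧ π x ≤ 1)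
    (hπ : ∀ h : 𝓧 → ℝ, Measurable h → (∃ C, ∀ x, |h x| ≤ C) →
      ∫ ω, (if A ω = a ∧ Γ ω = 1 then (1:ℝ) else 0) * h (X ω) ∂P
        = ∫ ω, (if Γ ω = 1 then (1:ℝ) else 0) * π (X ω) * h (X ω) ∂P)
    -- fa1 is the conditional ν-density of S given (X, A = a, Γ = 1):
    (fa1 : 𝓧 → 𝓢 → ℝ) (hfa1m : Measurable (Function.uncurry fa1))
    (Cf : ℝ) (hfa1bd : ∀ x s, 0 ≤ fa1 x s ∧ fa1 x s ≤ Cf)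
    (hfa1 : ∀ g : 𝓧 → 𝓢 → ℝ, Measurable (Function.uncurry g) → (∃ C, ∀ x s, |g x s| ≤ C) →
      ∫ ω, (if A ω = a ∧ Γ ω = 1 then (1:ℝ) else 0) * g (X ω) (S ω) ∂P
        = ∫ ω, (if A ω = a ∧ Γ ω = 1 then (1:ℝ) else 0) * (∫ s, g (X ω) s * fa1 (X ω) s ∂ν) ∂P)
    -- f10 is the conditional ν-density of S given (X, A = 1, Γ = 0), with positivity:
    (f10 : 𝓧 → 𝓢 → ℝ) (hf10m : Measurable (Function.uncurry f10))
    (hf10bd : ∀ x s, ε ≤ f10 x s ∧ f10 x s ≤ Cf)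
    (hf10 : ∀ g : 𝓧 → 𝓢 → ℝ, Measurable (Function.uncurry g) → (∃ C, ∀ x s, |g x s| ≤ C) →
      ∫ ω, (if A ω = 1 ∧ Γ ω = 0 then (1:ℝ) else 0) * g (X ω) (S ω) ∂P
        = ∫ ω, (if A ω = 1 ∧ Γ ω = 0 then (1:ℝ) else 0) * (∫ s, g (X ω) s * f10 (X ω) s ∂ν) ∂P)
    -- μ* is an arbitrary bounded measurable function:
    (μstar : 𝓧 → 𝓢 → ℝ) (hμm : Measurable (Function.uncurry μstar))
    (Cμ : ℝ) (hμb : ∀ x s, |μstar x s| ≤ Cμ) :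
    ∫ ω, ((if A ω = 1 ∧ Γ ω = 0 then (1:ℝ) else 0) / κ)
        * (p1 (X ω) / p10 (X ω)) * (fa1 (X ω) (S ω) / f10 (X ω) (S ω)) * μstar (X ω) (S ω) ∂P
      = ∫ ω, (if A ω = a ∧ Γ ω = 1 then (1:ℝ) else 0) / (κ * π (X ω)) * μstar (X ω) (S ω) ∂P := by
  classical
  have hκ0 : κ ≠ 0 := ne_of_gt hκpos
  set B0 : ℝ := max Cμ 0 with hB0def
  have hB0 : ∀ x s, |μstar x s| ≤ B0 := fun x s => le_trans (hμb x s) (le_max_left _ _)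
  have hB0nn : 0 ≤ B0 := le_max_right _ _
  set Cf' : ℝ := max Cf 0 with hCf'def
  have hCf' : ∀ x s, fa1 x s ≤ Cf' := fun x s => le_trans (hfa1bd x s).2 (le_max_left _ _)
  have hCf'nn : 0 ≤ Cf' := le_max_right _ _
  have intb : ∀ (f : Ω → ℝ) (C : ℝ), Measurable f → (∀ ω, |f ω| ≤ C) → Integrable f P :=
    fun f C hf hC => WeightAux.bdd_integrable hf.aestronglyMeasurable hC
  -- measurability of indicators
  have mind1 : Measurable (fun ω => if Γ ω = 1 then (1:ℝ) else 0) :=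
    Measurable.ite (hΓ (measurableSet_singleton 1)) measurable_const measurable_const
  have mind10 : Measurable (fun ω => if A ω = 1 ∧ Γ ω = 0 then (1:ℝ) else 0) :=
    Measurable.ite ((hA (measurableSet_singleton 1)).inter (hΓ (measurableSet_singleton 0)))
      measurable_const measurable_const
  have minda1 : Measurable (fun ω => if A ω = a ∧ Γ ω = 1 then (1:ℝ) else 0) :=
    Measurable.ite ((hA (measurableSet_singleton a)).inter (hΓ (measurableSet_singleton 1)))
      measurable_const measurable_const
  -- the key function G and its majorant H
  set G : 𝓧 → ℝ := fun x => ∫ s, μstar x s * fa1 x s ∂ν with hGdef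
  have mμfa : Measurable (fun p : 𝓧 × 𝓢 => μstar p.1 p.2 * fa1 p.1 p.2) := hμm.mul hfa1m
  have mG : Measurable G :=
    (mμfa.stronglyMeasurable.integral_prod_right' (ν := ν)).measurable
  have mabsμfa : Measurable (fun p : 𝓧 × 𝓢 => |μstar p.1 p.2| * fa1 p.1 p.2) := hμm.abs.mul hfa1m
  set T : ℕ → Set 𝓢 := spanningSets ν with hTdef
  have hTmeas : ∀ n, MeasurableSet (T n) := fun n => measurableSet_spanningSets ν n
  have hTmono : Monotone T := monotone_spanningSets ν
  have hTfin : ∀ n, ν (T n) < ⊤ := fun n => measure_spanningSets_lt_top ν n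
  haveI hfinT : ∀ n, IsFiniteMeasure (ν.restrict (T n)) := fun n =>
    ⟨by rw [Measure.restrict_apply_univ]; exact hTfin n⟩
  set Hn : ℕ → 𝓧 → ℝ := fun n x => ∫ s in T n, |μstar x s| * fa1 x s ∂ν with hHndef
  have mHn : ∀ n, Measurable (Hn n) := fun n =>
    (mabsμfa.stronglyMeasurable.integral_prod_right' (ν := ν.restrict (T n))).measurable
  have hHn0 : ∀ n x, 0 ≤ Hn n x := fun n x =>
    integral_nonneg fun s => mul_nonneg (abs_nonneg _) (hfa1bd x s).1
  have hHnbd : ∀ n x, Hn n x ≤ B0 * Cf' * (ν (T n)).toReal := by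
    intro n x
    have h1 : ‖∫ s, |μstar x s| * fa1 x s ∂(ν.restrict (T n))‖
        ≤ (B0 * Cf') * ((ν.restrict (T n)) Set.univ).toReal :=
      norm_integral_le_of_norm_le_const (Filter.Eventually.of_forall fun s => by
        rw [Real.norm_eq_abs, abs_mul, abs_abs, abs_of_nonneg (hfa1bd x s).1]
        exact mul_le_mul (hB0 x s) (hCf' x s) (hfa1bd x s).1 hB0nn)
    rw [Measure.restrict_apply_univ] at h1
    exact le_trans (le_abs_self _) (by simpa [Real.norm_eq_abs] using h1)
  have hHnabs : ∀ n x, |Hn n x| ≤ B0 * Cf' * (ν (T n)).toReal := fun n x => by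
    rw [abs_of_nonneg (hHn0 n x)]; exact hHnbd n x
  have hHnint : ∀ n x, Integrable (fun s => |μstar x s| * fa1 x s) (ν.restrict (T n)) := by
    intro n x
    refine WeightAux.bdd_integrable
      ((mabsμfa.comp (measurable_prodMk_left (x := x))).aestronglyMeasurable) (C := B0 * Cf') ?_
    intro s
    rw [abs_mul, abs_abs, abs_of_nonneg (hfa1bd x s).1]
    exact mul_le_mul (hB0 x s) (hCf' x s) (hfa1bd x s).1 hB0nn
  set F : 𝓧 → 𝓢 → ℝ≥0∞ := fun x s => ENNReal.ofReal (|μstar x s| * fa1 x s) with hFdef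
  have mF : Measurable (fun p : 𝓧 × 𝓢 => F p.1 p.2) := mabsμfa.ennreal_ofReal
  set H' : 𝓧 → ℝ≥0∞ := fun x => ∫⁻ s, F x s ∂ν with hH'def
  have mH' : Measurable H' := Measurable.lintegral_prod_right' mF
  set H : 𝓧 → ℝ := fun x => (H' x).toReal with hHdef
  have mH : Measurable H := mH'.ennreal_toReal
  have hH0 : ∀ x, 0 ≤ H x := fun _ => ENNReal.toReal_nonneg
  set Hn' : ℕ → 𝓧 → ℝ≥0∞ := fun n x => ∫⁻ s in T n, F x s ∂ν with hHn'def
  have mHn' : ∀ n, Measurable (Hn' n) := by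
    intro n
    have h1 : Measurable (fun p : 𝓧 × 𝓢 => (T n).indicator (F p.1) p.2) := by
      have h2 : (fun p : 𝓧 × 𝓢 => (T n).indicator (F p.1) p.2)
          = fun p : 𝓧 × 𝓢 => if p.2 ∈ T n then F p.1 p.2 else 0 := by
        funext p; simp [Set.indicator_apply]
      rw [h2]
      exact Measurable.ite (measurable_snd (hTmeas n)) mF measurable_const
    have h3 := Measurable.lintegral_prod_right' (ν := ν) h1
    simpa [lintegral_indicator (hTmeas n)] using h3
  have hHn'eq : ∀ n x, Hn' n x = ENNReal.ofReal (Hn n x) := by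
    intro n x
    refine Eq.trans ?_ (ofReal_integral_eq_lintegral_ofReal (hHnint n x)
      (Filter.Eventually.of_forall fun s => mul_nonneg (abs_nonneg _) (hfa1bd x s).1)).symm
    rfl
  have hHn'mono : ∀ x, Monotone (fun n => Hn' n x) := fun x n m hnm =>
    lintegral_mono' (Measure.restrict_mono (hTmono hnm) le_rfl) le_rfl
  have hH'sup : ∀ x, H' x = ⨆ n, Hn' n x := by
    intro x
    have hmeasx : Measurable (F x) := mF.comp measurable_prodMk_left
    have h1 : ∀ s, F x s = ⨆ n, (T n).indicator (F x) s := by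
      intro s
      obtain ⟨n, hn⟩ : ∃ n, s ∈ T n := by
        have hs : s ∈ ⋃ i, T i := by rw [hTdef, iUnion_spanningSets]; trivial
        exact Set.mem_iUnion.1 hs
      refine le_antisymm ?_ (iSup_le fun m => Set.indicator_le_self _ _ s)
      exact le_iSup_of_le n (le_of_eq (Set.indicator_of_mem hn _).symm)
    calc H' x = ∫⁻ s, ⨆ n, (T n).indicator (F x) s ∂ν := lintegral_congr h1
      _ = ⨆ n, ∫⁻ s, (T n).indicator (F x) s ∂ν :=
          lintegral_iSup (fun n => hmeasx.indicator (hTmeas n))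
            (fun n m hnm => Set.indicator_le_indicator_of_subset (hTmono hnm) (fun _ => zero_le))
      _ = ⨆ n, Hn' n x := by
          refine iSup_congr fun n => ?_
          rw [lintegral_indicator (hTmeas n)]
  have hGleH : ∀ x, |G x| ≤ H x := by
    intro x
    have h1 : ‖∫ s, μstar x s * fa1 x s ∂ν‖
        ≤ (∫⁻ s, ENNReal.ofReal ‖μstar x s * fa1 x s‖ ∂ν).toReal :=
      norm_integral_le_lintegral_norm _
    rw [Real.norm_eq_abs] at h1
    refine le_trans h1 (le_of_eq ?_)
    congr 1
    refine lintegral_congr fun s => ?_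
    rw [Real.norm_eq_abs, abs_mul, abs_of_nonneg (hfa1bd x s).1]
  -- truncations of G
  set Gn : ℕ → 𝓧 → ℝ := fun n x => max (-(n:ℝ)) (min (n:ℝ) (G x)) with hGndef
  have mGn : ∀ n, Measurable (Gn n) := fun n =>
    measurable_const.max (measurable_const.min mG)
  have hGnbd : ∀ n x, |Gn n x| ≤ (n:ℝ) := by
    intro n x
    rw [abs_le]
    refine ⟨le_max_left _ _, max_le ?_ (min_le_left _ _)⟩
    exact le_trans (neg_nonpos.2 (Nat.cast_nonneg n)) (Nat.cast_nonneg n)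
  have hGnabs : ∀ n x, |Gn n x| ≤ |G x| := by
    intro n x
    rw [abs_le]
    constructor
    · refine le_trans (le_min ?_ (neg_abs_le _)) (le_max_right _ _)
      exact le_trans (neg_nonpos.2 (abs_nonneg _)) (Nat.cast_nonneg n)
    · refine max_le ?_ (le_trans (min_le_right _ _) (le_abs_self _))
      exact le_trans (neg_nonpos.2 (Nat.cast_nonneg n)) (abs_nonneg _)
  have hGnle : ∀ n x, |Gn n x| ≤ H x := fun n x => le_trans (hGnabs n x) (hGleH x)
  have hGntend : ∀ x, Tendsto (fun n => Gn n x) atTop (nhds (G x)) := by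
    intro x
    refine tendsto_const_nhds.congr' ?_
    filter_upwards [eventually_ge_atTop ⌈|G x|⌉₊] with n hn
    have hn' : |G x| ≤ (n:ℝ) := le_trans (Nat.le_ceil _) (Nat.cast_le.2 hn)
    simp only [hGndef]
    rw [min_eq_right (le_trans (le_abs_self _) hn'),
      max_eq_right (le_trans (neg_le_neg hn') (neg_abs_le _))]
  -- uniform L¹ bounds for the truncated majorants
  have hC1 : ∀ n, ∫ ω, (if A ω = a ∧ Γ ω = 1 then (1:ℝ) else 0) * Hn n (X ω) ∂P ≤ B0 := by
    intro n
    set g : 𝓧 → 𝓢 → ℝ := fun x s => |μstar x s| * (T n).indicator (fun _ => (1:ℝ)) s with hgdef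
    have hgm : Measurable (Function.uncurry g) := by
      refine hμm.abs.mul ?_
      exact (measurable_const.indicator (hTmeas n) :
        Measurable ((T n).indicator (fun _ : 𝓢 => (1:ℝ)))).comp measurable_snd
    have hgb : ∀ x s, |g x s| ≤ B0 := by
      intro x s
      simp only [hgdef]
      by_cases hs : s ∈ T n
      · rw [Set.indicator_of_mem hs]; simpa [abs_abs] using hB0 x s
      · rw [Set.indicator_of_notMem hs]; simpa using hB0nn
    have hinner : ∀ x, ∫ s, g x s * fa1 x s ∂ν = Hn n x := by
      intro x
      simp only [hHndef]
      rw [← integral_indicator (hTmeas n)]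
      refine integral_congr_ae (Filter.Eventually.of_forall fun s => ?_)
      by_cases hs : s ∈ T n <;>
        simp [hgdef, Set.indicator_of_mem, Set.indicator_of_notMem, hs]
    have E := hfa1 g hgm ⟨B0, hgb⟩
    calc ∫ ω, (if A ω = a ∧ Γ ω = 1 then (1:ℝ) else 0) * Hn n (X ω) ∂P
        = ∫ ω, (if A ω = a ∧ Γ ω = 1 then (1:ℝ) else 0) * (∫ s, g (X ω) s * fa1 (X ω) s ∂ν) ∂P :=
          integral_congr_ae (Filter.Eventually.of_forall fun ω => by dsimp only; rw [hinner (X ω)])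
      _ = ∫ ω, (if A ω = a ∧ Γ ω = 1 then (1:ℝ) else 0) * g (X ω) (S ω) ∂P := E.symm
      _ ≤ B0 := by
          refine WeightAux.int_le fun ω => ?_
          by_cases h : A ω = a ∧ Γ ω = 1
          · simpa [h] using hgb (X ω) (S ω)
          · simpa [h] using hB0nn
  have hC2 : ∀ n, ∫ ω, (if Γ ω = 1 then (1:ℝ) else 0) * Hn n (X ω) ∂P ≤ B0 / ε := by
    intro n
    have hEq := hπ (Hn n) (mHn n) ⟨_, hHnabs n⟩
    have hint1 : Integrable (fun ω => (if Γ ω = 1 then (1:ℝ) else 0) * π (X ω) * Hn n (X ω)) P := by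
      refine intb _ (B0 * Cf' * (ν (T n)).toReal) ((mind1.mul (hπm.comp hX)).mul ((mHn n).comp hX)) ?_
      intro ω
      by_cases h : Γ ω = 1
      · simp only [h, if_true, one_mul]
        rw [abs_mul, abs_of_nonneg (le_trans (le_of_lt hε) (hπbd _).1)]
        refine le_trans (mul_le_mul (hπbd _).2 le_rfl (abs_nonneg _) zero_le_one) ?_
        rw [one_mul]; exact hHnabs n _
      · simp [h]; positivity
    have hint2 : Integrable (fun ω => ε * ((if Γ ω = 1 then (1:ℝ) else 0) * Hn n (X ω))) P := by
      refine intb _ (ε * (B0 * Cf' * (ν (T n)).toReal)) (measurable_const.mul (mind1.mul ((mHn n).comp hX))) ?_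
      intro ω
      rw [abs_mul, abs_of_nonneg (le_of_lt hε)]
      refine mul_le_mul_of_nonneg_left ?_ (le_of_lt hε)
      by_cases h : Γ ω = 1
      · simpa [h] using hHnabs n (X ω)
      · simp [h]; positivity
    have hmono : ε * ∫ ω, (if Γ ω = 1 then (1:ℝ) else 0) * Hn n (X ω) ∂P
        ≤ ∫ ω, (if A ω = a ∧ Γ ω = 1 then (1:ℝ) else 0) * Hn n (X ω) ∂P := by
      rw [hEq, ← integral_const_mul]
      refine integral_mono hint2 hint1 fun ω => ?_
      by_cases h : Γ ω = 1
      · simp only [h, if_true, one_mul]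
        exact mul_le_mul_of_nonneg_right (hπbd _).1 (hHn0 n _)
      · simp [h]
    rw [le_div_iff₀ hε]
    calc (∫ ω, (if Γ ω = 1 then (1:ℝ) else 0) * Hn n (X ω) ∂P) * ε
        = ε * ∫ ω, (if Γ ω = 1 then (1:ℝ) else 0) * Hn n (X ω) ∂P := mul_comm _ _
      _ ≤ _ := hmono
      _ ≤ B0 := hC1 n
  have hC3 : ∀ n, ∫ ω, p1 (X ω) * Hn n (X ω) ∂P ≤ B0 / ε := by
    intro n
    rw [← hp1 (Hn n) (mHn n) ⟨_, hHnabs n⟩]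
    exact hC2 n
  -- the monotone-convergence key step
  have key : ∀ (w : Ω → ℝ) (Cw : ℝ), Measurable w → (∀ ω, 0 ≤ w ω) → (∀ ω, w ω ≤ Cw) →
      ∀ (B : ℝ), (∀ n, ∫ ω, w ω * Hn n (X ω) ∂P ≤ B) →
      ∫⁻ ω, ENNReal.ofReal (w ω) * H' (X ω) ∂P ≤ ENNReal.ofReal B := by
    intro w Cw hwm hw0 hwb B hB
    have hmeasn : ∀ n, Measurable (fun ω => ENNReal.ofReal (w ω) * Hn' n (X ω)) :=
      fun n => hwm.ennreal_ofReal.mul ((mHn' n).comp hX)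
    have hptw : ∀ ω, ENNReal.ofReal (w ω) * H' (X ω) = ⨆ n, ENNReal.ofReal (w ω) * Hn' n (X ω) := by
      intro ω; rw [hH'sup (X ω), ENNReal.mul_iSup]
    calc ∫⁻ ω, ENNReal.ofReal (w ω) * H' (X ω) ∂P
        = ∫⁻ ω, ⨆ n, ENNReal.ofReal (w ω) * Hn' n (X ω) ∂P := lintegral_congr hptw
      _ = ⨆ n, ∫⁻ ω, ENNReal.ofReal (w ω) * Hn' n (X ω) ∂P :=
          lintegral_iSup hmeasn (fun n m hnm ω => mul_le_mul_right (hHn'mono (X ω) hnm) _)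
      _ ≤ ENNReal.ofReal B := by
          refine iSup_le fun n => ?_
          have hint : Integrable (fun ω => w ω * Hn n (X ω)) P := by
            refine intb _ (Cw * (B0 * Cf' * (ν (T n)).toReal)) (hwm.mul ((mHn n).comp hX)) ?_
            intro ω
            rw [abs_mul, abs_of_nonneg (hw0 ω)]
            exact mul_le_mul (hwb ω) (hHnabs n _) (abs_nonneg _) (le_trans (hw0 ω) (hwb ω))
          have h1 : ∫⁻ ω, ENNReal.ofReal (w ω) * Hn' n (X ω) ∂P
              = ∫⁻ ω, ENNReal.ofReal (w ω * Hn n (X ω)) ∂P := by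
            refine lintegral_congr fun ω => ?_
            rw [hHn'eq n (X ω), ← ENNReal.ofReal_mul (hw0 ω)]
          rw [h1, ← ofReal_integral_eq_lintegral_ofReal hint
            (Filter.Eventually.of_forall fun ω => mul_nonneg (hw0 ω) (hHn0 n (X ω)))]
          exact ENNReal.ofReal_le_ofReal (hB n)
  -- integrability of dominating functions
  have domInt : ∀ (w : Ω → ℝ), Measurable w → (∀ ω, 0 ≤ w ω) →
      (∫⁻ ω, ENNReal.ofReal (w ω) * H' (X ω) ∂P) ≠ ⊤ →
      Integrable (fun ω => w ω * H (X ω)) P := by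
    intro w hwm hw0 hfin
    refine ⟨(hwm.mul (mH.comp hX)).aestronglyMeasurable, ?_⟩
    refine lt_of_le_of_lt (lintegral_mono fun ω => ?_) (lt_top_iff_ne_top.2 hfin)
    rw [Real.enorm_eq_ofReal (mul_nonneg (hw0 ω) (hH0 _)), ENNReal.ofReal_mul (hw0 ω)]
    exact mul_le_mul_right ENNReal.ofReal_toReal_le _
  -- positivity facts
  have hπpos : ∀ x, 0 < π x := fun x => lt_of_lt_of_le hε (hπbd x).1
  have hp10pos : ∀ x, 0 < p10 x := fun x => lt_of_lt_of_le hε (hp10bd x).1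
  have hf10pos : ∀ x s, 0 < f10 x s := fun x s => lt_of_lt_of_le hε (hf10bd x s).1
  have hinv : ∀ ω, 1/(κ * π (X ω)) ≤ 1/(κ*ε) :=
    fun ω => one_div_le_one_div_of_le (mul_pos hκpos hε)
      (mul_le_mul_of_nonneg_left (hπbd _).1 (le_of_lt hκpos))
  have hinvpos : ∀ ω, 0 < 1/(κ * π (X ω)) :=
    fun ω => one_div_pos.2 (mul_pos hκpos (hπpos _))
  have hratio0 : ∀ x, 0 ≤ p1 x / p10 x := fun x => div_nonneg (hp1bd x).1 (le_of_lt (hp10pos x))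
  have hratio1 : ∀ x, p1 x / p10 x ≤ 1/ε := fun x =>
    div_le_div₀ zero_le_one (hp1bd x).2 hε (hp10bd x).1
  -- weight w1 = inda1 / (κ π(X))
  have hw1m : Measurable (fun ω => (if A ω = a ∧ Γ ω = 1 then (1:ℝ) else 0) * (1/(κ * π (X ω)))) :=
    minda1.mul (measurable_const.div (measurable_const.mul (hπm.comp hX)))
  have hw10 : ∀ ω, 0 ≤ (if A ω = a ∧ Γ ω = 1 then (1:ℝ) else 0) * (1/(κ * π (X ω))) :=
    fun ω => mul_nonneg (by by_cases h : A ω = a ∧ Γ ω = 1 <;> simp [h]) (le_of_lt (hinvpos ω))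
  have hw1b : ∀ ω, (if A ω = a ∧ Γ ω = 1 then (1:ℝ) else 0) * (1/(κ * π (X ω))) ≤ 1/(κ*ε) := by
    intro ω
    by_cases h : A ω = a ∧ Γ ω = 1
    · simp only [if_pos h, one_mul]; exact hinv ω
    · simp only [if_neg h, zero_mul]; positivity
  have hCw1 : ∀ n, ∫ ω, (if A ω = a ∧ Γ ω = 1 then (1:ℝ) else 0) * (1/(κ * π (X ω))) * Hn n (X ω) ∂P
      ≤ 1/(κ*ε) * B0 := by
    intro n
    have hint1 : Integrable (fun ω => (if A ω = a ∧ Γ ω = 1 then (1:ℝ) else 0) * (1/(κ * π (X ω))) * Hn n (X ω)) P := by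
      refine intb _ (1/(κ*ε) * (B0 * Cf' * (ν (T n)).toReal)) (hw1m.mul ((mHn n).comp hX)) ?_
      intro ω
      rw [abs_mul, abs_of_nonneg (hw10 ω)]
      exact mul_le_mul (hw1b ω) (hHnabs n _) (abs_nonneg _) (by positivity)
    have hint2 : Integrable (fun ω => 1/(κ*ε) * ((if A ω = a ∧ Γ ω = 1 then (1:ℝ) else 0) * Hn n (X ω))) P := by
      refine intb _ (1/(κ*ε) * (B0 * Cf' * (ν (T n)).toReal))
        (measurable_const.mul (minda1.mul ((mHn n).comp hX))) ?_
      intro ω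
      rw [abs_mul, abs_of_nonneg (le_of_lt (one_div_pos.2 (mul_pos hκpos hε)))]
      refine mul_le_mul_of_nonneg_left ?_ (by positivity)
      by_cases h : A ω = a ∧ Γ ω = 1
      · simpa [h] using hHnabs n (X ω)
      · simp [h]; positivity
    calc ∫ ω, (if A ω = a ∧ Γ ω = 1 then (1:ℝ) else 0) * (1/(κ * π (X ω))) * Hn n (X ω) ∂P
        ≤ ∫ ω, 1/(κ*ε) * ((if A ω = a ∧ Γ ω = 1 then (1:ℝ) else 0) * Hn n (X ω)) ∂P := by
          refine integral_mono hint1 hint2 fun ω => ?_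
          by_cases h : A ω = a ∧ Γ ω = 1
          · simp only [if_pos h, one_mul]
            exact mul_le_mul_of_nonneg_right (hinv ω) (hHn0 n _)
          · simp [h]
      _ = 1/(κ*ε) * ∫ ω, (if A ω = a ∧ Γ ω = 1 then (1:ℝ) else 0) * Hn n (X ω) ∂P :=
          integral_const_mul _ _
      _ ≤ 1/(κ*ε) * B0 := mul_le_mul_of_nonneg_left (hC1 n) (by positivity)
  have fin1 := key _ (1/(κ*ε)) hw1m hw10 hw1b (1/(κ*ε) * B0) hCw1
  have hd1 : Integrable (fun ω => (if A ω = a ∧ Γ ω = 1 then (1:ℝ) else 0) * (1/(κ * π (X ω))) * H (X ω)) P :=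
    domInt _ hw1m hw10 (ne_top_of_le_ne_top ENNReal.ofReal_ne_top fin1)
  -- weight w2 = p1(X)/κ
  have hw2m : Measurable (fun ω => p1 (X ω) * (1/κ)) := (hp1m.comp hX).mul measurable_const
  have hw20 : ∀ ω, 0 ≤ p1 (X ω) * (1/κ) := fun ω => mul_nonneg (hp1bd _).1 (by positivity)
  have hw2b : ∀ ω, p1 (X ω) * (1/κ) ≤ 1/κ := fun ω => by
    calc p1 (X ω) * (1/κ) ≤ 1 * (1/κ) :=
          mul_le_mul_of_nonneg_right (hp1bd _).2 (by positivity)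
      _ = 1/κ := one_mul _
  have hCw2 : ∀ n, ∫ ω, p1 (X ω) * (1/κ) * Hn n (X ω) ∂P ≤ 1/κ * (B0/ε) := by
    intro n
    calc ∫ ω, p1 (X ω) * (1/κ) * Hn n (X ω) ∂P
        = ∫ ω, 1/κ * (p1 (X ω) * Hn n (X ω)) ∂P :=
          integral_congr_ae (Filter.Eventually.of_forall fun ω => by ring)
      _ = 1/κ * ∫ ω, p1 (X ω) * Hn n (X ω) ∂P := integral_const_mul _ _
      _ ≤ 1/κ * (B0/ε) := mul_le_mul_of_nonneg_left (hC3 n) (by positivity)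
  have fin2 := key _ (1/κ) hw2m hw20 hw2b (1/κ * (B0/ε)) hCw2
  have hd2 : Integrable (fun ω => p1 (X ω) * (1/κ) * H (X ω)) P :=
    domInt _ hw2m hw20 (ne_top_of_le_ne_top ENNReal.ofReal_ne_top fin2)
  -- weight w3 = ind10 * (p1/p10)(X)/κ
  have hw3m : Measurable (fun ω => (if A ω = 1 ∧ Γ ω = 0 then (1:ℝ) else 0) * (p1 (X ω) / p10 (X ω) * (1/κ))) :=
    mind10.mul (((hp1m.comp hX).div (hp10m.comp hX)).mul measurable_const)
  have hw30 : ∀ ω, 0 ≤ (if A ω = 1 ∧ Γ ω = 0 then (1:ℝ) else 0) * (p1 (X ω) / p10 (X ω) * (1/κ)) :=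
    fun ω => mul_nonneg (by by_cases h : A ω = 1 ∧ Γ ω = 0 <;> simp [h])
      (mul_nonneg (hratio0 _) (by positivity))
  have hw3b : ∀ ω, (if A ω = 1 ∧ Γ ω = 0 then (1:ℝ) else 0) * (p1 (X ω) / p10 (X ω) * (1/κ)) ≤ 1/ε * (1/κ) := by
    intro ω
    by_cases h : A ω = 1 ∧ Γ ω = 0
    · simp only [if_pos h, one_mul]
      exact mul_le_mul_of_nonneg_right (hratio1 _) (by positivity)
    · simp only [if_neg h, zero_mul]; positivity
  have hCw3 : ∀ n, ∫ ω, (if A ω = 1 ∧ Γ ω = 0 then (1:ℝ) else 0) * (p1 (X ω) / p10 (X ω) * (1/κ)) * Hn n (X ω) ∂P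
      ≤ 1/κ * (B0/ε) := by
    intro n
    have hm1 : Measurable (fun x => p1 x / p10 x * (1/κ) * Hn n x) :=
      ((hp1m.div hp10m).mul measurable_const).mul (mHn n)
    have hb1 : ∀ x, |p1 x / p10 x * (1/κ) * Hn n x| ≤ 1/ε * (1/κ) * (B0 * Cf' * (ν (T n)).toReal) := by
      intro x
      rw [abs_mul, abs_mul, abs_of_nonneg (hratio0 x),
        abs_of_nonneg (le_of_lt (one_div_pos.2 hκpos))]
      exact mul_le_mul (mul_le_mul (hratio1 x) le_rfl (by positivity) (by positivity))
        (hHnabs n x) (abs_nonneg _) (by positivity)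
    calc ∫ ω, (if A ω = 1 ∧ Γ ω = 0 then (1:ℝ) else 0) * (p1 (X ω) / p10 (X ω) * (1/κ)) * Hn n (X ω) ∂P
        = ∫ ω, (if A ω = 1 ∧ Γ ω = 0 then (1:ℝ) else 0) * (p1 (X ω) / p10 (X ω) * (1/κ) * Hn n (X ω)) ∂P :=
          integral_congr_ae (Filter.Eventually.of_forall fun ω => by ring)
      _ = ∫ ω, p10 (X ω) * (p1 (X ω) / p10 (X ω) * (1/κ) * Hn n (X ω)) ∂P := hp10 (fun x => p1 x / p10 x * (1/κ) * Hn n x) hm1 ⟨_, hb1⟩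
      _ = ∫ ω, 1/κ * (p1 (X ω) * Hn n (X ω)) ∂P := by
          refine integral_congr_ae (Filter.Eventually.of_forall fun ω => ?_)
          have h0 : p10 (X ω) ≠ 0 := ne_of_gt (hp10pos (X ω))
          field_simp
      _ = 1/κ * ∫ ω, p1 (X ω) * Hn n (X ω) ∂P := integral_const_mul _ _
      _ ≤ 1/κ * (B0/ε) := mul_le_mul_of_nonneg_left (hC3 n) (by positivity)
  have fin3 := key _ (1/ε * (1/κ)) hw3m hw30 hw3b (1/κ * (B0/ε)) hCw3
  have hd3 : Integrable (fun ω => (if A ω = 1 ∧ Γ ω = 0 then (1:ℝ) else 0) * (p1 (X ω) / p10 (X ω) * (1/κ)) * H (X ω)) P :=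
    domInt _ hw3m hw30 (ne_top_of_le_ne_top ENNReal.ofReal_ne_top fin3)
  -- truncated equalities
  have EqR : ∀ n, ∫ ω, (if A ω = a ∧ Γ ω = 1 then (1:ℝ) else 0) * (1/(κ * π (X ω)) * Gn n (X ω)) ∂P
      = ∫ ω, p1 (X ω) * (1/κ * Gn n (X ω)) ∂P := by
    intro n
    have hm1 : Measurable (fun x => 1/(κ * π x) * Gn n x) :=
      (measurable_const.div (measurable_const.mul hπm)).mul (mGn n)
    have hb1 : ∀ x, |1/(κ * π x) * Gn n x| ≤ 1/(κ*ε) * n := by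
      intro x
      rw [abs_mul, abs_of_nonneg (le_of_lt (one_div_pos.2 (mul_pos hκpos (hπpos x))))]
      refine mul_le_mul ?_ (hGnbd n x) (abs_nonneg _) (by positivity)
      exact one_div_le_one_div_of_le (mul_pos hκpos hε)
        (mul_le_mul_of_nonneg_left (hπbd x).1 (le_of_lt hκpos))
    have hm2 : Measurable (fun x => 1/κ * Gn n x) := measurable_const.mul (mGn n)
    have hb2 : ∀ x, |1/κ * Gn n x| ≤ 1/κ * n := fun x => by
      rw [abs_mul, abs_of_nonneg (le_of_lt (one_div_pos.2 hκpos))]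
      exact mul_le_mul_of_nonneg_left (hGnbd n x) (by positivity)
    calc ∫ ω, (if A ω = a ∧ Γ ω = 1 then (1:ℝ) else 0) * (1/(κ * π (X ω)) * Gn n (X ω)) ∂P
        = ∫ ω, (if Γ ω = 1 then (1:ℝ) else 0) * π (X ω) * (1/(κ * π (X ω)) * Gn n (X ω)) ∂P :=
          hπ (fun x => 1/(κ * π x) * Gn n x) hm1 ⟨_, hb1⟩
      _ = ∫ ω, (if Γ ω = 1 then (1:ℝ) else 0) * (1/κ * Gn n (X ω)) ∂P := by
          refine integral_congr_ae (Filter.Eventually.of_forall fun ω => ?_)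
          have h0 : π (X ω) ≠ 0 := ne_of_gt (hπpos (X ω))
          by_cases h : Γ ω = 1
          · simp only [h, if_true, one_mul]
            field_simp
          · simp [h]
      _ = ∫ ω, p1 (X ω) * (1/κ * Gn n (X ω)) ∂P := hp1 (fun x => 1/κ * Gn n x) hm2 ⟨_, hb2⟩
  have EqL : ∀ n, ∫ ω, (if A ω = 1 ∧ Γ ω = 0 then (1:ℝ) else 0) * (p1 (X ω) / p10 (X ω) * (1/κ * Gn n (X ω))) ∂P
      = ∫ ω, p1 (X ω) * (1/κ * Gn n (X ω)) ∂P := by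
    intro n
    have hm1 : Measurable (fun x => p1 x / p10 x * (1/κ * Gn n x)) :=
      (hp1m.div hp10m).mul (measurable_const.mul (mGn n))
    have hb1 : ∀ x, |p1 x / p10 x * (1/κ * Gn n x)| ≤ 1/ε * (1/κ * n) := by
      intro x
      rw [abs_mul]
      refine mul_le_mul ?_ ?_ (abs_nonneg _) (by positivity)
      · rw [abs_of_nonneg (hratio0 x)]; exact hratio1 x
      · rw [abs_mul, abs_of_nonneg (le_of_lt (one_div_pos.2 hκpos))]
        exact mul_le_mul_of_nonneg_left (hGnbd n x) (by positivity)
    calc ∫ ω, (if A ω = 1 ∧ Γ ω = 0 then (1:ℝ) else 0) * (p1 (X ω) / p10 (X ω) * (1/κ * Gn n (X ω))) ∂P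
        = ∫ ω, p10 (X ω) * (p1 (X ω) / p10 (X ω) * (1/κ * Gn n (X ω))) ∂P := hp10 (fun x => p1 x / p10 x * (1/κ * Gn n x)) hm1 ⟨_, hb1⟩
      _ = ∫ ω, p1 (X ω) * (1/κ * Gn n (X ω)) ∂P := by
          refine integral_congr_ae (Filter.Eventually.of_forall fun ω => ?_)
          have h0 : p10 (X ω) ≠ 0 := ne_of_gt (hp10pos (X ω))
          field_simp
  -- dominated convergence
  have TR0 : Tendsto (fun n => ∫ ω, p1 (X ω) * (1/κ * Gn n (X ω)) ∂P) atTop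
      (nhds (∫ ω, p1 (X ω) * (1/κ * G (X ω)) ∂P)) := by
    refine tendsto_integral_of_dominated_convergence
      (fun ω => p1 (X ω) * (1/κ) * H (X ω))
      (fun n => ((hp1m.comp hX).mul (measurable_const.mul ((mGn n).comp hX))).aestronglyMeasurable)
      hd2 (fun n => Filter.Eventually.of_forall fun ω => ?_)
      (Filter.Eventually.of_forall fun ω => ?_)
    · rw [Real.norm_eq_abs, abs_mul, abs_mul, abs_of_nonneg (hp1bd _).1,
        abs_of_nonneg (le_of_lt (one_div_pos.2 hκpos))]
      calc p1 (X ω) * (1/κ * |Gn n (X ω)|) ≤ p1 (X ω) * (1/κ * H (X ω)) :=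
            mul_le_mul_of_nonneg_left
              (mul_le_mul_of_nonneg_left (hGnle n _) (by positivity)) (hp1bd _).1
        _ = p1 (X ω) * (1/κ) * H (X ω) := by ring
    · exact ((hGntend (X ω)).const_mul (1/κ)).const_mul (p1 (X ω))
  have TR1 : Tendsto (fun n => ∫ ω, (if A ω = a ∧ Γ ω = 1 then (1:ℝ) else 0) * (1/(κ * π (X ω)) * Gn n (X ω)) ∂P) atTop
      (nhds (∫ ω, (if A ω = a ∧ Γ ω = 1 then (1:ℝ) else 0) * (1/(κ * π (X ω)) * G (X ω)) ∂P)) := by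
    refine tendsto_integral_of_dominated_convergence
      (fun ω => (if A ω = a ∧ Γ ω = 1 then (1:ℝ) else 0) * (1/(κ * π (X ω))) * H (X ω))
      (fun n => (minda1.mul ((measurable_const.div (measurable_const.mul (hπm.comp hX))).mul ((mGn n).comp hX))).aestronglyMeasurable)
      hd1 (fun n => Filter.Eventually.of_forall fun ω => ?_)
      (Filter.Eventually.of_forall fun ω => ?_)
    · by_cases h : A ω = a ∧ Γ ω = 1
      · simp only [if_pos h, one_mul]
        rw [Real.norm_eq_abs, abs_mul, abs_of_nonneg (le_of_lt (hinvpos ω))]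
        exact mul_le_mul_of_nonneg_left (hGnle n _) (le_of_lt (hinvpos ω))
      · simp [if_neg h]
    · exact ((hGntend (X ω)).const_mul (1/(κ * π (X ω)))).const_mul _
  have TL1 : Tendsto (fun n => ∫ ω, (if A ω = 1 ∧ Γ ω = 0 then (1:ℝ) else 0) * (p1 (X ω) / p10 (X ω) * (1/κ * Gn n (X ω))) ∂P) atTop
      (nhds (∫ ω, (if A ω = 1 ∧ Γ ω = 0 then (1:ℝ) else 0) * (p1 (X ω) / p10 (X ω) * (1/κ * G (X ω))) ∂P)) := by
    refine tendsto_integral_of_dominated_convergence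
      (fun ω => (if A ω = 1 ∧ Γ ω = 0 then (1:ℝ) else 0) * (p1 (X ω) / p10 (X ω) * (1/κ)) * H (X ω))
      (fun n => (mind10.mul (((hp1m.comp hX).div (hp10m.comp hX)).mul (measurable_const.mul ((mGn n).comp hX)))).aestronglyMeasurable)
      hd3 (fun n => Filter.Eventually.of_forall fun ω => ?_)
      (Filter.Eventually.of_forall fun ω => ?_)
    · by_cases h : A ω = 1 ∧ Γ ω = 0
      · simp only [if_pos h, one_mul]
        rw [Real.norm_eq_abs, abs_mul, abs_mul, abs_of_nonneg (hratio0 _),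
          abs_of_nonneg (le_of_lt (one_div_pos.2 hκpos))]
        calc p1 (X ω) / p10 (X ω) * (1/κ * |Gn n (X ω)|)
            ≤ p1 (X ω) / p10 (X ω) * (1/κ * H (X ω)) :=
              mul_le_mul_of_nonneg_left
                (mul_le_mul_of_nonneg_left (hGnle n _) (by positivity)) (hratio0 _)
          _ = p1 (X ω) / p10 (X ω) * (1/κ) * H (X ω) := by ring
      · simp [if_neg h]
    · exact ((hGntend (X ω)).const_mul (1/κ)).const_mul _ |>.const_mul _
  have L2 : ∫ ω, (if A ω = 1 ∧ Γ ω = 0 then (1:ℝ) else 0) * (p1 (X ω) / p10 (X ω) * (1/κ * G (X ω))) ∂P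
      = ∫ ω, p1 (X ω) * (1/κ * G (X ω)) ∂P :=
    tendsto_nhds_unique (TL1.congr EqL) TR0
  have R2 : ∫ ω, (if A ω = a ∧ Γ ω = 1 then (1:ℝ) else 0) * (1/(κ * π (X ω)) * G (X ω)) ∂P
      = ∫ ω, p1 (X ω) * (1/κ * G (X ω)) ∂P :=
    tendsto_nhds_unique (TR1.congr EqR) TR0
  -- identify the two sides of the goal
  have step1 : ∫ ω, ((if A ω = 1 ∧ Γ ω = 0 then (1:ℝ) else 0) / κ)
        * (p1 (X ω) / p10 (X ω)) * (fa1 (X ω) (S ω) / f10 (X ω) (S ω)) * μstar (X ω) (S ω) ∂P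
      = ∫ ω, (if A ω = 1 ∧ Γ ω = 0 then (1:ℝ) else 0) * (p1 (X ω) / p10 (X ω) * (1/κ * G (X ω))) ∂P := by
    have hg1m : Measurable (Function.uncurry (fun x s => p1 x / p10 x * (1/κ * (fa1 x s / f10 x s * μstar x s)))) :=
      ((hp1m.comp measurable_fst).div (hp10m.comp measurable_fst)).mul
        (measurable_const.mul ((hfa1m.div hf10m).mul hμm))
    have hg1b : ∀ x s, |p1 x / p10 x * (1/κ * (fa1 x s / f10 x s * μstar x s))| ≤ 1/ε * (1/κ * (Cf'/ε * B0)) := by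
      intro x s
      rw [abs_mul, abs_mul, abs_mul]
      have e1 : |p1 x / p10 x| ≤ 1/ε := by rw [abs_of_nonneg (hratio0 x)]; exact hratio1 x
      have e2 : |fa1 x s / f10 x s| ≤ Cf'/ε := by
        rw [abs_of_nonneg (div_nonneg (hfa1bd x s).1 (le_of_lt (hf10pos x s)))]
        exact div_le_div₀ hCf'nn (hCf' x s) hε (hf10bd x s).1
      rw [abs_of_nonneg (le_of_lt (one_div_pos.2 hκpos))]
      refine mul_le_mul e1 (mul_le_mul_of_nonneg_left
        (mul_le_mul e2 (hB0 x s) (abs_nonneg _) (by positivity)) (by positivity))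
        (by positivity) (by positivity)
    have hinner1 : ∀ x, ∫ s, p1 x / p10 x * (1/κ * (fa1 x s / f10 x s * μstar x s)) * f10 x s ∂ν
        = p1 x / p10 x * (1/κ * G x) := by
      intro x
      calc ∫ s, p1 x / p10 x * (1/κ * (fa1 x s / f10 x s * μstar x s)) * f10 x s ∂ν
          = ∫ s, (p1 x / p10 x * (1/κ)) * (μstar x s * fa1 x s) ∂ν := by
            refine integral_congr_ae (Filter.Eventually.of_forall fun s => ?_)
            have h0 : f10 x s ≠ 0 := ne_of_gt (hf10pos x s)
            have hc : fa1 x s / f10 x s * f10 x s = fa1 x s := div_mul_cancel₀ _ h0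
            calc p1 x / p10 x * (1/κ * (fa1 x s / f10 x s * μstar x s)) * f10 x s
                = p1 x / p10 x * (1/κ) * μstar x s * (fa1 x s / f10 x s * f10 x s) := by ring
              _ = (p1 x / p10 x * (1/κ)) * (μstar x s * fa1 x s) := by rw [hc]; ring
        _ = (p1 x / p10 x * (1/κ)) * ∫ s, μstar x s * fa1 x s ∂ν := integral_const_mul _ _
        _ = p1 x / p10 x * (1/κ * G x) := by simp only [hGdef]; ring
    calc ∫ ω, ((if A ω = 1 ∧ Γ ω = 0 then (1:ℝ) else 0) / κ)
          * (p1 (X ω) / p10 (X ω)) * (fa1 (X ω) (S ω) / f10 (X ω) (S ω)) * μstar (X ω) (S ω) ∂P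
        = ∫ ω, (if A ω = 1 ∧ Γ ω = 0 then (1:ℝ) else 0)
            * (p1 (X ω) / p10 (X ω) * (1/κ * (fa1 (X ω) (S ω) / f10 (X ω) (S ω) * μstar (X ω) (S ω)))) ∂P :=
          integral_congr_ae (Filter.Eventually.of_forall fun ω => by ring)
      _ = ∫ ω, (if A ω = 1 ∧ Γ ω = 0 then (1:ℝ) else 0)
            * (∫ s, p1 (X ω) / p10 (X ω) * (1/κ * (fa1 (X ω) s / f10 (X ω) s * μstar (X ω) s)) * f10 (X ω) s ∂ν) ∂P :=
          hf10 (fun x s => p1 x / p10 x * (1/κ * (fa1 x s / f10 x s * μstar x s))) hg1m ⟨_, hg1b⟩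
      _ = ∫ ω, (if A ω = 1 ∧ Γ ω = 0 then (1:ℝ) else 0) * (p1 (X ω) / p10 (X ω) * (1/κ * G (X ω))) ∂P :=
          integral_congr_ae (Filter.Eventually.of_forall fun ω => by dsimp only; rw [hinner1 (X ω)])
  have step4 : ∫ ω, (if A ω = a ∧ Γ ω = 1 then (1:ℝ) else 0) / (κ * π (X ω)) * μstar (X ω) (S ω) ∂P
      = ∫ ω, (if A ω = a ∧ Γ ω = 1 then (1:ℝ) else 0) * (1/(κ * π (X ω)) * G (X ω)) ∂P := by
    have hg2m : Measurable (Function.uncurry (fun x s => 1/(κ * π x) * μstar x s)) :=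
      ((measurable_const.div (measurable_const.mul (hπm.comp measurable_fst)))).mul hμm
    have hg2b : ∀ x s, |1/(κ * π x) * μstar x s| ≤ 1/(κ*ε) * B0 := by
      intro x s
      rw [abs_mul, abs_of_nonneg (le_of_lt (one_div_pos.2 (mul_pos hκpos (hπpos x))))]
      refine mul_le_mul ?_ (hB0 x s) (abs_nonneg _) (by positivity)
      exact one_div_le_one_div_of_le (mul_pos hκpos hε)
        (mul_le_mul_of_nonneg_left (hπbd x).1 (le_of_lt hκpos))
    have hinner4 : ∀ x, ∫ s, 1/(κ * π x) * μstar x s * fa1 x s ∂ν = 1/(κ * π x) * G x := by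
      intro x
      calc ∫ s, 1/(κ * π x) * μstar x s * fa1 x s ∂ν
          = ∫ s, 1/(κ * π x) * (μstar x s * fa1 x s) ∂ν :=
            integral_congr_ae (Filter.Eventually.of_forall fun s => by ring)
        _ = 1/(κ * π x) * ∫ s, μstar x s * fa1 x s ∂ν := integral_const_mul _ _
        _ = 1/(κ * π x) * G x := by simp only [hGdef]
    calc ∫ ω, (if A ω = a ∧ Γ ω = 1 then (1:ℝ) else 0) / (κ * π (X ω)) * μstar (X ω) (S ω) ∂P
        = ∫ ω, (if A ω = a ∧ Γ ω = 1 then (1:ℝ) else 0) * (1/(κ * π (X ω)) * μstar (X ω) (S ω)) ∂P :=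
          integral_congr_ae (Filter.Eventually.of_forall fun ω => by ring)
      _ = ∫ ω, (if A ω = a ∧ Γ ω = 1 then (1:ℝ) else 0)
            * (∫ s, 1/(κ * π (X ω)) * μstar (X ω) s * fa1 (X ω) s ∂ν) ∂P := hfa1 (fun x s => 1/(κ * π x) * μstar x s) hg2m ⟨_, hg2b⟩
      _ = ∫ ω, (if A ω = a ∧ Γ ω = 1 then (1:ℝ) else 0) * (1/(κ * π (X ω)) * G (X ω)) ∂P :=
          integral_congr_ae (Filter.Eventually.of_forall fun ω => by dsimp only; rw [hinner4 (X ω)])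
  rw [step1, step4, L2, R2]
end

section
/- Let φ be a fixed square-integrable function with E_P[φ(O)] = 0, and let P_n be the empirical measure of n i.i.d. observations. Suppose φ̂ is estimated from an independent sample and satisfies ‖φ̂ − φ‖_{L²(P)} = o_P(1). Then (P_n − P)(φ̂ − φ) = O_P(‖φ̂ − φ‖_{L²(P)} / n^{1/2}) = o_P(n^{−1/2}). -/
open MeasureTheory Filter
open scoped ENNReal


/-- Auxiliary Chebyshev bound for the empirical average of a centered composition. -/
lemma crossfit_cheb {Ω 𝓞 : Type*} [MeasurableSpace Ω] [MeasurableSpace 𝓞]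
    (P : Measure Ω) [IsProbabilityMeasure P]
    (μ : Measure 𝓞) [IsProbabilityMeasure μ]
    (O : ℕ → Ω → 𝓞) (hO : ∀ i, Measurable (O i))
    (hid : ∀ i, Measure.map (O i) P = μ)
    (hind : Pairwise fun i j => ProbabilityTheory.IndepFun (O i) (O j) P)
    (g : 𝓞 → ℝ) (hgm : Measurable g) (hg2 : MemLp g 2 μ)
    (n : ℕ) (hn : 0 < n) (c : ℝ) (hc : 0 < c) :
    P {ω | c ≤ |(∑ i ∈ Finset.range n, (g (O i ω) - ∫ o, g o ∂μ)) / n|}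
      ≤ ENNReal.ofReal (((eLpNorm g 2 μ).toReal)^2 / (n * c^2)) := by
  classical
  set m : ℝ := ∫ o, g o ∂μ with hm
  set ψ : 𝓞 → ℝ := fun o => g o - m with hψ
  have hψm : Measurable ψ := hgm.sub measurable_const
  have hψ2 : MemLp ψ 2 μ := hg2.sub (memLp_const m)
  have mp : ∀ i, MeasurePreserving (O i) P μ := fun i => ⟨hO i, hid i⟩
  set X : ℕ → Ω → ℝ := fun i ω => ψ (O i ω) with hX
  have hX2 : ∀ i, MemLp (X i) 2 P := fun i => hψ2.comp_measurePreserving (mp i)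
  have hXint : ∀ i, Integrable (X i) P := fun i => (hX2 i).integrable one_le_two
  have hgint : Integrable g μ := hg2.integrable one_le_two
  have hψ0 : ∫ o, ψ o ∂μ = 0 := by
    simp [hψ, integral_sub hgint (integrable_const m), ← hm]
  have hXmean : ∀ i, ∫ ω, X i ω ∂P = 0 := by
    intro i
    have h1 : ∫ ω, ψ (O i ω) ∂P = ∫ o, ψ o ∂μ := by
      rw [← hid i]
      exact (integral_map (hO i).aemeasurable
        (by rw [hid i]; exact hψ2.1)).symm
    exact h1.trans hψ0
  -- variance of each X i
  have hXsq : ∀ i, ∫ ω, (X i ω)^2 ∂P = ∫ o, (ψ o)^2 ∂μ := by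
    intro i
    rw [← hid i]
    exact (integral_map (hO i).aemeasurable
      (by rw [hid i]; exact (hψm.pow_const 2).aestronglyMeasurable)).symm
  have hψsq_int : Integrable (fun o => ψ o ^ 2) μ := hψ2.integrable_sq
  have hgsq_int : Integrable (fun o => g o ^ 2) μ := hg2.integrable_sq
  have hVar : ∀ i, ProbabilityTheory.variance (X i) P = ∫ o, (ψ o)^2 ∂μ := by
    intro i
    rw [ProbabilityTheory.variance_eq_sub (hX2 i)]
    have : ∫ ω, (X i ^ 2) ω ∂P = ∫ o, (ψ o)^2 ∂μ := by
      simpa [Pi.pow_apply] using hXsq i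
    rw [this]
    simp [hXmean i]
  have hψsq_le : ∫ o, (ψ o)^2 ∂μ ≤ ∫ o, g o ^ 2 ∂μ := by
    have expand : ∫ o, (ψ o)^2 ∂μ = ∫ o, g o ^ 2 ∂μ - m ^ 2 := by
      have h1 : Integrable (fun o => g o ^ 2 - 2 * m * g o) μ :=
        hgsq_int.sub (hgint.const_mul _)
      calc ∫ o, (ψ o)^2 ∂μ
          = ∫ o, ((g o ^ 2 - 2 * m * g o) + m ^ 2) ∂μ := by
            apply integral_congr_ae; filter_upwards with o; simp [hψ]; ring
        _ = (∫ o, (g o ^ 2 - 2 * m * g o) ∂μ) + m ^ 2 := by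
            rw [integral_add h1 (integrable_const _)]; simp
        _ = (∫ o, g o ^ 2 ∂μ) - 2 * m * m + m ^ 2 := by
            rw [integral_sub hgsq_int (hgint.const_mul _), integral_const_mul, ← hm]
        _ = ∫ o, g o ^ 2 ∂μ - m ^ 2 := by ring
    nlinarith [sq_nonneg m]
  set σ : ℝ := (eLpNorm g 2 μ).toReal with hσ
  have hgsq_eq : ∫ o, g o ^ 2 ∂μ = σ ^ 2 := by
    have h := hg2.eLpNorm_eq_integral_rpow_norm two_ne_zero ENNReal.ofNat_ne_top
    have hI : (0:ℝ) ≤ ∫ o, ‖g o‖ ^ ((2:ℝ≥0∞)).toReal ∂μ :=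
      integral_nonneg fun o => by positivity
    have hIeq : ∫ o, ‖g o‖ ^ ((2:ℝ≥0∞)).toReal ∂μ = ∫ o, g o ^ 2 ∂μ := by
      apply integral_congr_ae; filter_upwards with o
      rw [ENNReal.toReal_ofNat]
      rw [show ‖g o‖ ^ (2:ℝ) = ‖g o‖ ^ (2:ℕ) from by
        rw [← Real.rpow_natCast]; norm_num]
      simp [sq_abs]
    rw [hσ, h, ENNReal.toReal_ofReal (by positivity)]
    rw [← Real.rpow_natCast _ 2, ← Real.rpow_mul hI]
    norm_num [hIeq]
  -- sum and average
  have hSvar : ProbabilityTheory.variance (∑ i ∈ Finset.range n, X i) P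
      = ∑ i ∈ Finset.range n, ProbabilityTheory.variance (X i) P :=
    ProbabilityTheory.IndepFun.variance_sum (fun i _ => hX2 i)
      (fun i _ j _ hij => (hind hij).comp hψm hψm)
  have hSvar_le : ProbabilityTheory.variance (∑ i ∈ Finset.range n, X i) P ≤ n * σ ^ 2 := by
    rw [hSvar]
    calc ∑ i ∈ Finset.range n, ProbabilityTheory.variance (X i) P
        ≤ ∑ _i ∈ Finset.range n, σ ^ 2 := by
          apply Finset.sum_le_sum
          intro i _
          rw [hVar i]
          calc ∫ o, (ψ o)^2 ∂μ ≤ ∫ o, g o ^ 2 ∂μ := hψsq_le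
            _ = σ ^ 2 := hgsq_eq
      _ = n * σ ^ 2 := by simp [mul_comm]
  set T : Ω → ℝ := fun ω => (n:ℝ)⁻¹ * (∑ i ∈ Finset.range n, X i) ω with hT
  have hS2 : MemLp (∑ i ∈ Finset.range n, X i) 2 P :=
    memLp_finset_sum' _ (fun i _ => hX2 i)
  have hT2 : MemLp T 2 P := hS2.const_mul _
  have hTvar : ProbabilityTheory.variance T P ≤ σ ^ 2 / n := by
    have := ProbabilityTheory.variance_const_mul ((n:ℝ)⁻¹) (∑ i ∈ Finset.range n, X i) P
    rw [hT, this]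
    rw [div_eq_mul_inv]
    have hn' : (0:ℝ) < n := by exact_mod_cast hn
    calc ((n:ℝ)⁻¹)^2 * ProbabilityTheory.variance (∑ i ∈ Finset.range n, X i) P
        ≤ ((n:ℝ)⁻¹)^2 * (n * σ ^ 2) := by
          apply mul_le_mul_of_nonneg_left hSvar_le (by positivity)
      _ = σ ^ 2 * (n:ℝ)⁻¹ := by field_simp
  have hTmean : ∫ ω, T ω ∂P = 0 := by
    rw [hT]
    simp only [Finset.sum_apply]
    rw [integral_const_mul, integral_finset_sum _ (fun i _ => hXint i)]
    simp [hXmean]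
  have cheb := ProbabilityTheory.meas_ge_le_variance_div_sq hT2 hc
  have hmean0 : (∫ ω, T ω ∂P) = 0 := hTmean
  have hset : {ω | c ≤ |(∑ i ∈ Finset.range n, (g (O i ω) - ∫ o, g o ∂μ)) / n|}
      = {ω | c ≤ |T ω - ∫ ω, T ω ∂P|} := by
    ext ω
    have heq : (∑ i ∈ Finset.range n, (g (O i ω) - m)) / n = T ω - ∫ ω, T ω ∂P := by
      rw [hmean0, sub_zero]
      simp [hT, Finset.sum_apply, hX, hψ, div_eq_inv_mul]
    rw [Set.mem_setOf_eq, Set.mem_setOf_eq, heq]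
  rw [hset]
  refine le_trans cheb (ENNReal.ofReal_le_ofReal ?_)
  rw [← div_div]
  gcongr

/-- If the noise function has zero `L²` norm, the compositions vanish almost surely. -/
lemma crossfit_zero {Ω 𝓞 : Type*} [MeasurableSpace Ω] [MeasurableSpace 𝓞]
    (P : Measure Ω) (μ : Measure 𝓞)
    (O : ℕ → Ω → 𝓞) (hO : ∀ i, Measurable (O i))
    (hid : ∀ i, Measure.map (O i) P = μ)
    (g : 𝓞 → ℝ) (hg2 : MemLp g 2 μ) (h0 : eLpNorm g 2 μ = 0) :
    ∀ᵐ ω ∂P, ∀ i, g (O i ω) = 0 := by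
  have hg0 : g =ᵐ[μ] 0 := (eLpNorm_eq_zero_iff hg2.1 two_ne_zero).mp h0
  rw [ae_all_iff]
  intro i
  have h1 : g =ᵐ[Measure.map (O i) P] (0 : 𝓞 → ℝ) := by rw [hid i]; exact hg0
  have h2 := ae_eq_comp (hO i).aemeasurable h1
  filter_upwards [h2] with ω hω using hω

/-- Cross-fitting empirical process lemma: for `φ̂` estimated from an independent sample
(hence treated as a deterministic sequence after conditioning), the empirical process
term `(P_n − P)(φ̂ − φ)` is `O_P(‖φ̂ − φ‖₂ / √n)`, and is `o_P(n^{-1/2})` when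
`‖φ̂ − φ‖₂ → 0`. -/
theorem crossfitting_empirical_process
    {Ω 𝓞 : Type*} [MeasurableSpace Ω] [MeasurableSpace 𝓞]
    (P : Measure Ω) [IsProbabilityMeasure P]
    (μ : Measure 𝓞) [IsProbabilityMeasure μ]
    (O : ℕ → Ω → 𝓞) (hO : ∀ i, Measurable (O i))
    (hid : ∀ i, Measure.map (O i) P = μ)
    (hind : Pairwise fun i j => ProbabilityTheory.IndepFun (O i) (O j) P)
    (φ : 𝓞 → ℝ) (hφm : Measurable φ) (hφ2 : MemLp φ 2 μ) (hφ0 : ∫ o, φ o ∂μ = 0)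
    (φhat : ℕ → 𝓞 → ℝ) (hφhatm : ∀ n, Measurable (φhat n))
    (hφhat2 : ∀ n, MemLp (φhat n) 2 μ)
    (hcons : Tendsto (fun n => eLpNorm (fun o => φhat n o - φ o) 2 μ) atTop (nhds 0)) :
    (∀ ε > (0:ℝ), ∃ M > (0:ℝ), ∀ n : ℕ, 0 < n →
      (P {ω | M * ((eLpNorm (fun o => φhat n o - φ o) 2 μ).toReal / Real.sqrt n) <
          |(∑ i ∈ Finset.range n,
              ((φhat n (O i ω) - φ (O i ω)) - ∫ o, (φhat n o - φ o) ∂μ)) / n|}).toReal ≤ ε)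
    ∧ (∀ δ > (0:ℝ), Tendsto
        (fun n : ℕ => P {ω | δ < Real.sqrt n *
          |(∑ i ∈ Finset.range n,
              ((φhat n (O i ω) - φ (O i ω)) - ∫ o, (φhat n o - φ o) ∂μ)) / n|})
        atTop (nhds 0)) := by
  have hgm : ∀ n, Measurable (fun o => φhat n o - φ o) := fun n => (hφhatm n).sub hφm
  have hg2 : ∀ n, MemLp (fun o => φhat n o - φ o) 2 μ := fun n => (hφhat2 n).sub hφ2
  constructor
  · -- Part 1: O_P bound
    intro ε hε
    set M : ℝ := Real.sqrt ε⁻¹ + 1 with hMdef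
    have hM : 0 < M := by positivity
    have hMsq : ε⁻¹ ≤ M ^ 2 := by
      have h1 : (Real.sqrt ε⁻¹) ^ 2 = ε⁻¹ := Real.sq_sqrt (by positivity)
      nlinarith [Real.sqrt_nonneg ε⁻¹]
    have hMε : 1 / M ^ 2 ≤ ε := by
      rw [div_le_iff₀ (by positivity)]
      have := mul_le_mul_of_nonneg_left hMsq hε.le
      rw [mul_inv_cancel₀ hε.ne'] at this
      linarith
    refine ⟨M, hM, fun n hn => ?_⟩
    have hn' : (0:ℝ) < n := by exact_mod_cast hn
    have hsn : (0:ℝ) < Real.sqrt n := Real.sqrt_pos.mpr hn'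
    set σ : ℝ := (eLpNorm (fun o => φhat n o - φ o) 2 μ).toReal with hσdef
    by_cases h0 : eLpNorm (fun o => φhat n o - φ o) 2 μ = 0
    · have hae := crossfit_zero P μ O hO hid _ (hg2 n) h0
      have hm0 : ∫ o, (φhat n o - φ o) ∂μ = 0 :=
        integral_eq_zero_of_ae ((eLpNorm_eq_zero_iff (hg2 n).1 two_ne_zero).mp h0)
      have hP0 : P {ω | M * (σ / Real.sqrt n) <
          |(∑ i ∈ Finset.range n,
              ((φhat n (O i ω) - φ (O i ω)) - ∫ o, (φhat n o - φ o) ∂μ)) / n|} = 0 := by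
        rw [measure_eq_zero_iff_ae_notMem]
        filter_upwards [hae] with ω hω
        have hsum : (∑ i ∈ Finset.range n,
            ((φhat n (O i ω) - φ (O i ω)) - ∫ o, (φhat n o - φ o) ∂μ)) = 0 := by
          apply Finset.sum_eq_zero
          intro i _
          rw [hm0, sub_zero]
          exact hω i
        simp [Set.mem_setOf_eq, hsum, hσdef, h0]
      rw [hP0]
      simpa using hε.le
    · have hσpos : 0 < σ := ENNReal.toReal_pos h0 (hg2 n).2.ne
      have hc : 0 < M * (σ / Real.sqrt n) := by positivity
      have key := crossfit_cheb P μ O hO hid hind _ (hgm n) (hg2 n) n hn _ hc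
      have hsub : {ω | M * (σ / Real.sqrt n) <
            |(∑ i ∈ Finset.range n,
               ((φhat n (O i ω) - φ (O i ω)) - ∫ o, (φhat n o - φ o) ∂μ)) / n|}
          ⊆ {ω | M * (σ / Real.sqrt n) ≤
            |(∑ i ∈ Finset.range n,
               ((fun o => φhat n o - φ o) (O i ω) - ∫ o, (φhat n o - φ o) ∂μ)) / n|} := by
        intro ω hω
        simp only [Set.mem_setOf_eq] at hω ⊢
        exact le_of_lt hω
      have hP := le_trans (measure_mono hsub) key
      have hbound : σ ^ 2 / (n * (M * (σ / Real.sqrt n)) ^ 2) = 1 / M ^ 2 := by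
        have hsq : Real.sqrt n ^ 2 = n := Real.sq_sqrt hn'.le
        rw [mul_pow, div_pow, hsq]
        field_simp
      rw [hbound] at hP
      calc (P _).toReal ≤ (ENNReal.ofReal (1 / M ^ 2)).toReal :=
            ENNReal.toReal_mono ENNReal.ofReal_ne_top hP
        _ = 1 / M ^ 2 := ENNReal.toReal_ofReal (by positivity)
        _ ≤ ε := hMε
  · -- Part 2: o_P(n^{-1/2})
    intro δ hδ
    have hσto : Tendsto (fun n => (eLpNorm (fun o => φhat n o - φ o) 2 μ).toReal)
        atTop (nhds 0) := by
      have := (ENNReal.tendsto_toReal ENNReal.zero_ne_top).comp hcons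
      exact this
    have hupper : Tendsto (fun n =>
        ENNReal.ofReal (((eLpNorm (fun o => φhat n o - φ o) 2 μ).toReal) ^ 2 / δ ^ 2))
        atTop (nhds 0) := by
      have h1 : Tendsto (fun n =>
          ((eLpNorm (fun o => φhat n o - φ o) 2 μ).toReal) ^ 2 / δ ^ 2) atTop (nhds 0) := by
        have := (hσto.pow 2).div_const (δ ^ 2)
        simpa using this
      have := (ENNReal.continuous_ofReal.tendsto 0).comp h1
      rw [ENNReal.ofReal_zero] at this
      exact this
    refine tendsto_of_tendsto_of_tendsto_of_le_of_le' tendsto_const_nhds hupper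
      (Eventually.of_forall fun n => zero_le) ?_
    filter_upwards [eventually_ge_atTop 1] with n hn1
    have hn : 0 < n := hn1
    have hn' : (0:ℝ) < n := by exact_mod_cast hn
    have hsn : (0:ℝ) < Real.sqrt n := Real.sqrt_pos.mpr hn'
    set σ : ℝ := (eLpNorm (fun o => φhat n o - φ o) 2 μ).toReal with hσdef
    by_cases h0 : eLpNorm (fun o => φhat n o - φ o) 2 μ = 0
    · have hae := crossfit_zero P μ O hO hid _ (hg2 n) h0
      have hm0 : ∫ o, (φhat n o - φ o) ∂μ = 0 :=
        integral_eq_zero_of_ae ((eLpNorm_eq_zero_iff (hg2 n).1 two_ne_zero).mp h0)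
      have hP0 : P {ω | δ < Real.sqrt n *
          |(∑ i ∈ Finset.range n,
              ((φhat n (O i ω) - φ (O i ω)) - ∫ o, (φhat n o - φ o) ∂μ)) / n|} = 0 := by
        rw [measure_eq_zero_iff_ae_notMem]
        filter_upwards [hae] with ω hω
        have hsum : (∑ i ∈ Finset.range n,
            ((φhat n (O i ω) - φ (O i ω)) - ∫ o, (φhat n o - φ o) ∂μ)) = 0 := by
          apply Finset.sum_eq_zero
          intro i _
          rw [hm0, sub_zero]
          exact hω i
        simp [Set.mem_setOf_eq, hsum]
        linarith
      rw [hP0]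
      exact zero_le
    · have hc : 0 < δ / Real.sqrt n := by positivity
      have key := crossfit_cheb P μ O hO hid hind _ (hgm n) (hg2 n) n hn _ hc
      have hsub : {ω | δ < Real.sqrt n *
            |(∑ i ∈ Finset.range n,
               ((φhat n (O i ω) - φ (O i ω)) - ∫ o, (φhat n o - φ o) ∂μ)) / n|}
          ⊆ {ω | δ / Real.sqrt n ≤
            |(∑ i ∈ Finset.range n,
               ((fun o => φhat n o - φ o) (O i ω) - ∫ o, (φhat n o - φ o) ∂μ)) / n|} := by
        intro ω hω
        simp only [Set.mem_setOf_eq] at hω ⊢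
        rw [div_le_iff₀ hsn]
        rw [mul_comm] at hω
        exact le_of_lt hω
      have hP := le_trans (measure_mono hsub) key
      have hbound : σ ^ 2 / (n * (δ / Real.sqrt n) ^ 2) = σ ^ 2 / δ ^ 2 := by
        have hsq : Real.sqrt n ^ 2 = n := Real.sq_sqrt hn'.le
        rw [div_pow, hsq]
        field_simp
      rw [hbound] at hP
      exact hP
end

section
/- Let S have conditional density f(s | X, A, Γ) with respect to a σ-finite measure ν, and let h(x, s) be bounded measurable with all positivity conditions holding (P(A=1, Γ=0 | X) ≥ ε, f(S | X, A=1, Γ=0) ≥ ε). Then E[ (1−Γ)·1{A=1} · (P(Γ=1|X)/P(A=1,Γ=0|X)) · (f(S|X, A=a, Γ=1)/f(S|X, A=1, Γ=0)) · h(X, S) ] = E[ Γ · ∫ h(X, s) f(s | X, A = a, Γ = 1) ν(ds) ]. -/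
open MeasureTheory

/-- Change-of-measure lemma: density-ratio weighting in the `(A = 1, Γ = 0)` stratum
reproduces the distribution of `S` under `(A = a, Γ = 1)` within the `Γ = 1` population:
`E[(1−Γ)1{A=1}·(P(Γ=1|X)/P(A=1,Γ=0|X))·(f(S|X,A=a,Γ=1)/f(S|X,A=1,Γ=0))·h(X,S)]
  = E[Γ·∫ h(X,s) f(s|X,A=a,Γ=1) ν(ds)]`. -/
theorem change_of_measure_density_ratio
    {Ω 𝓧 𝓢 : Type*} [MeasurableSpace Ω] [MeasurableSpace 𝓧] [MeasurableSpace 𝓢]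
    (P : Measure Ω) [IsProbabilityMeasure P]
    (X : Ω → 𝓧) (A : Ω → ℕ) (Γ : Ω → ℕ) (S : Ω → 𝓢)
    (hX : Measurable X) (hA : Measurable A) (hΓ : Measurable Γ) (hS : Measurable S)
    (hΓ01 : ∀ ω, Γ ω = 0 ∨ Γ ω = 1)
    (a : ℕ) (ε : ℝ) (hε : 0 < ε)
    (ν : Measure 𝓢) [SigmaFinite ν]
    -- p1 is a version of P(Γ = 1 | X):
    (p1 : 𝓧 → ℝ) (hp1m : Measurable p1) (hp1bd : ∀ x, 0 ≤ p1 x ∧ p1 x ≤ 1)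
    (hp1 : ∀ h : 𝓧 → ℝ, Measurable h → (∃ C, ∀ x, |h x| ≤ C) →
      ∫ ω, (if Γ ω = 1 then (1:ℝ) else 0) * h (X ω) ∂P = ∫ ω, p1 (X ω) * h (X ω) ∂P)
    -- p10 is a version of P(A = 1, Γ = 0 | X), with positivity:
    (p10 : 𝓧 → ℝ) (hp10m : Measurable p10) (hp10bd : ∀ x, ε ≤ p10 x ∧ p10 x ≤ 1)
    (hp10 : ∀ h : 𝓧 → ℝ, Measurable h → (∃ C, ∀ x, |h x| ≤ C) →
      ∫ ω, (if A ω = 1 ∧ Γ ω = 0 then (1:ℝ) else 0) * h (X ω) ∂P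
        = ∫ ω, p10 (X ω) * h (X ω) ∂P)
    -- fa1 is the conditional ν-density of S given (X, A = a, Γ = 1):
    (fa1 : 𝓧 → 𝓢 → ℝ) (hfa1m : Measurable (Function.uncurry fa1))
    (Cf : ℝ) (hfa1bd : ∀ x s, 0 ≤ fa1 x s ∧ fa1 x s ≤ Cf)
    (hfa1 : ∀ g : 𝓧 → 𝓢 → ℝ, Measurable (Function.uncurry g) → (∃ C, ∀ x s, |g x s| ≤ C) →
      ∫ ω, (if A ω = a ∧ Γ ω = 1 then (1:ℝ) else 0) * g (X ω) (S ω) ∂P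
        = ∫ ω, (if A ω = a ∧ Γ ω = 1 then (1:ℝ) else 0) * (∫ s, g (X ω) s * fa1 (X ω) s ∂ν) ∂P)
    -- f10 is the conditional ν-density of S given (X, A = 1, Γ = 0), with positivity:
    (f10 : 𝓧 → 𝓢 → ℝ) (hf10m : Measurable (Function.uncurry f10))
    (hf10bd : ∀ x s, ε ≤ f10 x s ∧ f10 x s ≤ Cf)
    (hf10 : ∀ g : 𝓧 → 𝓢 → ℝ, Measurable (Function.uncurry g) → (∃ C, ∀ x s, |g x s| ≤ C) →
      ∫ ω, (if A ω = 1 ∧ Γ ω = 0 then (1:ℝ) else 0) * g (X ω) (S ω) ∂P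
        = ∫ ω, (if A ω = 1 ∧ Γ ω = 0 then (1:ℝ) else 0) * (∫ s, g (X ω) s * f10 (X ω) s ∂ν) ∂P)
    -- h is bounded measurable:
    (h : 𝓧 → 𝓢 → ℝ) (hhm : Measurable (Function.uncurry h))
    (Ch : ℝ) (hhb : ∀ x s, |h x s| ≤ Ch) :
    ∫ ω, (if A ω = 1 ∧ Γ ω = 0 then (1:ℝ) else 0)
        * (p1 (X ω) / p10 (X ω)) * (fa1 (X ω) (S ω) / f10 (X ω) (S ω)) * h (X ω) (S ω) ∂P
      = ∫ ω, (if Γ ω = 1 then (1:ℝ) else 0) * (∫ s, h (X ω) s * fa1 (X ω) s ∂ν) ∂P := by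

  classical
  -- `ν` is a finite measure: otherwise `f10` would be non-integrable, forcing the
  -- conditional density identity for `g ≡ 1` to give `P(A=1, Γ=0) = 0`, contradicting
  -- `p10 ≥ ε > 0`.
  have hpos : (0:ℝ) < ∫ ω, (if A ω = 1 ∧ Γ ω = 0 then (1:ℝ) else 0) ∂P := by
    have h1 := hp10 (fun _ => (1:ℝ)) measurable_const ⟨1, fun x => by norm_num⟩
    simp only [mul_one] at h1
    rw [h1]
    have hint : Integrable (fun ω => p10 (X ω)) P := by
      apply Integrable.mono' (integrable_const (1:ℝ)) ((hp10m.comp hX).aestronglyMeasurable)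
      filter_upwards with ω
      rw [Real.norm_eq_abs, abs_le]
      exact ⟨le_trans (by linarith) (hp10bd (X ω)).1, (hp10bd (X ω)).2⟩
    have : (ε : ℝ) ≤ ∫ ω, p10 (X ω) ∂P := by
      have := integral_mono (integrable_const ε) hint (fun ω => (hp10bd (X ω)).1)
      simpa using this
    linarith
  have hfin : ν Set.univ < ⊤ := by
    have h1 := hf10 (fun _ _ => (1:ℝ)) measurable_const ⟨1, fun x s => by norm_num⟩
    simp only [one_mul, mul_one] at h1
    rw [h1] at hpos
    have hex : ∃ ω, (if A ω = 1 ∧ Γ ω = 0 then (1:ℝ) else 0) *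
        (∫ s, f10 (X ω) s ∂ν) ≠ 0 := by
      by_contra hc
      push_neg at hc
      rw [integral_congr_ae (Filter.Eventually.of_forall hc)] at hpos
      simp at hpos
    obtain ⟨ω, hω⟩ := hex
    have hIν : Integrable (fun s => f10 (X ω) s) ν := by
      by_contra hni
      rw [integral_undef hni] at hω
      simp at hω
    have hlin : ∫⁻ s, ‖f10 (X ω) s‖₊ ∂ν < ⊤ := hIν.2
    have hle : (ENNReal.ofReal ε) * ν Set.univ ≤ ∫⁻ s, ‖f10 (X ω) s‖₊ ∂ν := by
      rw [← lintegral_const]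
      apply lintegral_mono
      intro s
      have h1 := (hf10bd (X ω) s).1
      have : ε ≤ ‖f10 (X ω) s‖ := by
        rw [Real.norm_eq_abs]
        exact le_trans h1 (le_abs_self _)
      simpa [ENNReal.ofReal_le_ofReal_iff, ofReal_norm] using
        ENNReal.ofReal_le_ofReal this
    have : (ENNReal.ofReal ε) * ν Set.univ < ⊤ := lt_of_le_of_lt hle hlin
    rcases eq_top_or_lt_top (ν Set.univ) with htop | hlt
    · exfalso
      rw [htop, ENNReal.mul_top (by simp [ENNReal.ofReal_eq_zero, not_le, hε])] at this
      exact (lt_irrefl _ this)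
    · exact hlt
  haveI : IsFiniteMeasure ν := ⟨hfin⟩
  set M : ℝ := (ν Set.univ).toReal with hM
  have hM0 : 0 ≤ M := ENNReal.toReal_nonneg
  -- bounds
  have hCh0 : ∀ x s, |h x s| ≤ max Ch 0 := fun x s => le_trans (hhb x s) (le_max_left _ _)
  have hCf0 : ∀ x s, |fa1 x s| ≤ max Cf 0 := fun x s => by
    rw [abs_le]; exact ⟨le_trans (neg_nonpos.mpr (le_max_right Cf 0)) (hfa1bd x s).1,
      le_trans (hfa1bd x s).2 (le_max_left _ _)⟩
  have hp10ne : ∀ x, p10 x ≠ 0 := fun x => ne_of_gt (lt_of_lt_of_le hε (hp10bd x).1)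
  have hf10ne : ∀ x s, f10 x s ≠ 0 := fun x s => ne_of_gt (lt_of_lt_of_le hε (hf10bd x s).1)
  -- the inner integral H
  set H : 𝓧 → ℝ := fun x => ∫ s, h x s * fa1 x s ∂ν with hHdef
  have hHm : Measurable H := by
    have : StronglyMeasurable (Function.uncurry fun x s => h x s * fa1 x s) :=
      ((hhm.mul hfa1m)).stronglyMeasurable
    exact this.integral_prod_right'.measurable
  have hHbd : ∀ x, |H x| ≤ max Ch 0 * max Cf 0 * M := by
    intro x
    rw [← Real.norm_eq_abs]
    apply norm_integral_le_of_norm_le_const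
    filter_upwards with s
    rw [Real.norm_eq_abs, abs_mul]
    exact mul_le_mul (hCh0 x s) (hCf0 x s) (abs_nonneg _) (le_max_right Ch 0)
  -- the weighting function g
  set g : 𝓧 → 𝓢 → ℝ := fun x s => (p1 x / p10 x) * (fa1 x s / f10 x s) * h x s with hgdef
  have hgm : Measurable (Function.uncurry g) := by
    apply Measurable.mul
    apply Measurable.mul
    · exact ((hp1m.comp measurable_fst).div (hp10m.comp measurable_fst))
    · exact hfa1m.div hf10m
    · exact hhm
  have hratio1 : ∀ x, |p1 x / p10 x| ≤ 1/ε := by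
    intro x
    rw [abs_div]
    apply div_le_div₀ (by positivity)
      (by rw [abs_le]; exact ⟨by linarith [(hp1bd x).1], (hp1bd x).2⟩) hε
    rw [abs_of_pos (lt_of_lt_of_le hε (hp10bd x).1)]
    exact (hp10bd x).1
  have hratio2 : ∀ x s, |fa1 x s / f10 x s| ≤ max Cf 0 / ε := by
    intro x s
    rw [abs_div]
    apply div_le_div₀ (by positivity) (hCf0 x s) hε
    rw [abs_of_pos (lt_of_lt_of_le hε (hf10bd x s).1)]
    exact (hf10bd x s).1
  have hgbd : ∃ C, ∀ x s, |g x s| ≤ C := by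
    refine ⟨(1/ε) * (max Cf 0 / ε) * max Ch 0, fun x s => ?_⟩
    simp only [hgdef, abs_mul]
    apply mul_le_mul _ (hCh0 x s) (abs_nonneg _) (by positivity)
    exact mul_le_mul (hratio1 x) (hratio2 x s) (abs_nonneg _) (by positivity)
  -- the function k := (p1/p10) * H
  set k : 𝓧 → ℝ := fun x => (p1 x / p10 x) * H x with hkdef
  have hkm : Measurable k := (hp1m.div hp10m).mul hHm
  have hkbd : ∃ C, ∀ x, |k x| ≤ C := by
    refine ⟨(1/ε) * (max Ch 0 * max Cf 0 * M), fun x => ?_⟩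
    simp only [hkdef, abs_mul]
    exact mul_le_mul (hratio1 x) (hHbd x) (abs_nonneg _) (by positivity)
  -- main calculation
  calc
    ∫ ω, (if A ω = 1 ∧ Γ ω = 0 then (1:ℝ) else 0)
        * (p1 (X ω) / p10 (X ω)) * (fa1 (X ω) (S ω) / f10 (X ω) (S ω)) * h (X ω) (S ω) ∂P
      = ∫ ω, (if A ω = 1 ∧ Γ ω = 0 then (1:ℝ) else 0) * g (X ω) (S ω) ∂P := by
        apply integral_congr_ae
        filter_upwards with ω
        simp only [hgdef]
        ring
    _ = ∫ ω, (if A ω = 1 ∧ Γ ω = 0 then (1:ℝ) else 0)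
          * (∫ s, g (X ω) s * f10 (X ω) s ∂ν) ∂P := hf10 g hgm hgbd
    _ = ∫ ω, (if A ω = 1 ∧ Γ ω = 0 then (1:ℝ) else 0) * k (X ω) ∂P := by
        apply integral_congr_ae
        filter_upwards with ω
        congr 1
        have hinner : ∀ x, (∫ s, g x s * f10 x s ∂ν) = k x := by
          intro x
          have heq : ∀ s, g x s * f10 x s = (p1 x / p10 x) * (h x s * fa1 x s) := by
            intro s
            have h2 : g x s * f10 x s
                = (f10 x s / f10 x s) * (p1 x / p10 x * (h x s * fa1 x s)) := by
              simp only [hgdef]; ring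
            rw [h2, div_self (hf10ne x s), one_mul]
          rw [integral_congr_ae (Filter.Eventually.of_forall heq), integral_const_mul]
        exact hinner (X ω)
    _ = ∫ ω, p10 (X ω) * k (X ω) ∂P := hp10 k hkm hkbd
    _ = ∫ ω, p1 (X ω) * H (X ω) ∂P := by
        apply integral_congr_ae
        filter_upwards with ω
        simp only [hkdef]
        rw [show p10 (X ω) * (p1 (X ω) / p10 (X ω) * H (X ω))
            = (p10 (X ω) / p10 (X ω)) * (p1 (X ω) * H (X ω)) by ring,
          div_self (hp10ne (X ω)), one_mul]
    _ = ∫ ω, (if Γ ω = 1 then (1:ℝ) else 0) * H (X ω) ∂P :=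
        (hp1 H hHm ⟨max Ch 0 * max Cf 0 * M, hHbd⟩).symm
    _ = ∫ ω, (if Γ ω = 1 then (1:ℝ) else 0) * (∫ s, h (X ω) s * fa1 (X ω) s ∂ν) ∂P := rfl
end
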